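/- arXiv:2204.13375 — 6 statements merged into one kernel-verified Lean document; each statement's English description precedes it below -/
import Mathlib

section
/- Let q be a prime power and t a positive integer. If G is a finite group such that every soluble subgroup S of G contains a nilpotent normal subgroup of index at most t in S, and G has a section isomorphic to PSL(2,q), then q ≤ 2t + 1. -/
open Subgroup Matrix
open scoped commutatorElement

namespace PSLB

variable {F : Type} [Field F]

/-- upper triangular element of SL(2,F) -/
def tri (a b : F) (ha : a ≠ 0) : Matrix.SpecialLinearGroup (Fin 2) F :=
  ⟨!![a, b; 0, a⁻¹], by simp [Matrix.det_fin_two_of, mul_inv_cancel₀ ha]⟩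

lemma tri_mul (a b c d : F) (ha : a ≠ 0) (hc : c ≠ 0) :
    tri a b ha * tri c d hc = tri (a*c) (a*d + b*c⁻¹) (mul_ne_zero ha hc) := by
  apply Subtype.ext
  show (!![a, b; 0, a⁻¹] * !![c, d; 0, c⁻¹] : Matrix (Fin 2) (Fin 2) F) = !![a*c, a*d + b*c⁻¹; 0, (a*c)⁻¹]
  rw [Matrix.mul_fin_two]
  rw [mul_inv]
  congr 1 <;> ring

lemma tri_one : tri (1:F) 0 one_ne_zero = 1 := by
  apply Subtype.ext
  simp [tri]
  ext i j
  fin_cases i <;> fin_cases j <;> simp [Matrix.one_apply]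

lemma tri_inv (a b : F) (ha : a ≠ 0) :
    (tri a b ha)⁻¹ = tri a⁻¹ (-b) (inv_ne_zero ha) := by
  rw [Matrix.SpecialLinearGroup.SL2_inv_expl]
  apply Subtype.ext
  simp [tri]
  ext i j
  fin_cases i <;> fin_cases j <;> simp

lemma tri_inj {a b c d : F} {ha hc} (h : tri a b ha = tri c d hc) : a = c ∧ b = d := by
  have h0 := congrArg (fun M : Matrix.SpecialLinearGroup (Fin 2) F => (M : Matrix (Fin 2) (Fin 2) F) 0 0) h
  have h1 := congrArg (fun M : Matrix.SpecialLinearGroup (Fin 2) F => (M : Matrix (Fin 2) (Fin 2) F) 0 1) h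
  simp [tri] at h0 h1
  exact ⟨h0, h1⟩

variable (F) in
/-- the Borel subgroup of upper triangular matrices -/
def borel : Subgroup (Matrix.SpecialLinearGroup (Fin 2) F) where
  carrier := {M | (M : Matrix (Fin 2) (Fin 2) F) 1 0 = 0}
  one_mem' := by simp [Matrix.SpecialLinearGroup.coe_one, Matrix.one_apply]
  mul_mem' := by
    intro A B hA hB
    simp only [Set.mem_setOf_eq, Matrix.SpecialLinearGroup.coe_mul] at *
    rw [Matrix.mul_apply, Fin.sum_univ_two, hA, hB]
    ring
  inv_mem' := by
    intro A hA
    simp only [Set.mem_setOf_eq] at *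
    rw [Matrix.SpecialLinearGroup.SL2_inv_expl]
    simp [hA]

lemma a00_ne_zero {M : Matrix.SpecialLinearGroup (Fin 2) F} (hM : M ∈ borel F) :
    (M : Matrix (Fin 2) (Fin 2) F) 0 0 ≠ 0 := by
  intro h
  have hd := M.2
  rw [Matrix.det_fin_two] at hd
  rw [h, hM] at hd
  simp at hd

lemma mem_borel_iff_tri {M : Matrix.SpecialLinearGroup (Fin 2) F} (hM : M ∈ borel F) :
    M = tri ((M : Matrix (Fin 2) (Fin 2) F) 0 0) ((M : Matrix (Fin 2) (Fin 2) F) 0 1)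
      (a00_ne_zero hM) := by
  have hd := M.2
  rw [Matrix.det_fin_two] at hd
  rw [hM, mul_zero, sub_zero] at hd
  apply Subtype.ext
  ext i j
  fin_cases i <;> fin_cases j <;> simp [tri]
  · exact hM
  · exact eq_inv_of_mul_eq_one_left (by rw [mul_comm]; exact hd)

lemma tri_mem_borel (a b : F) (ha : a ≠ 0) : tri a b ha ∈ borel F := by
  show (!![a, b; 0, a⁻¹] : Matrix (Fin 2) (Fin 2) F) 1 0 = 0
  simp

/-- the diagonal character of the Borel subgroup -/
def delta : borel F →* Fˣ where
  toFun M := Units.mk0 ((M : Matrix (Fin 2) (Fin 2) F) 0 0) (a00_ne_zero M.2)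
  map_one' := by
    apply Units.ext
    simp
  map_mul' := by
    intro M N
    apply Units.ext
    push_cast
    simp only [Units.val_mk0, Subgroup.coe_mul, Matrix.SpecialLinearGroup.coe_mul]
    rw [Matrix.mul_apply, Fin.sum_univ_two, N.2.out]
    ring

lemma delta_tri (a b : F) (ha : a ≠ 0) (hm : tri a b ha ∈ borel F) :
    delta ⟨tri a b ha, hm⟩ = Units.mk0 a ha := by
  apply Units.ext
  simp [delta, tri]

lemma tri_apply00 {a b : F} {ha : a ≠ 0} :
    ((tri a b ha : Matrix.SpecialLinearGroup (Fin 2) F) : Matrix (Fin 2) (Fin 2) F) 0 0 = a := by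
  simp [tri]

lemma tri_congr {a b c d : F} {ha : a ≠ 0} {hc : c ≠ 0} (h1 : a = c) (h2 : b = d) :
    tri a b ha = tri c d hc := by subst h1; subst h2; rfl

lemma delta_apply_val (x : borel F) :
    ((delta (F := F)) x).val = (↑↑x : Matrix (Fin 2) (Fin 2) F) 0 0 := rfl

lemma ker_delta_commute (x y : borel F) (hx : x ∈ (delta (F := F)).ker)
    (hy : y ∈ (delta (F := F)).ker) : x * y = y * x := by
  have hx1 : (↑↑x : Matrix (Fin 2) (Fin 2) F) 0 0 = 1 := by
    rw [← delta_apply_val, MonoidHom.mem_ker.mp hx]; rfl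
  have hy1 : (↑↑y : Matrix (Fin 2) (Fin 2) F) 0 0 = 1 := by
    rw [← delta_apply_val, MonoidHom.mem_ker.mp hy]; rfl
  apply Subtype.ext
  rw [Subgroup.coe_mul, Subgroup.coe_mul, mem_borel_iff_tri x.2, mem_borel_iff_tri y.2,
    tri_mul, tri_mul]
  apply tri_congr
  · ring
  · rw [hx1, hy1]; ring

instance borel_solvable : Group.IsSolvable (borel F) := by
  haveI : Group.IsSolvable ((delta (F := F)).ker) :=
    isSolvable_of_comm (fun a b => Subtype.ext (by exact ker_delta_commute _ _ a.2 b.2))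
  exact solvable_of_ker_le_range ((delta (F := F)).ker.subtype) (delta (F := F))
    (by rw [Subgroup.range_subtype])

lemma comm_tri (x a b : F) (ha : a ≠ 0) :
    tri 1 x one_ne_zero * tri a b ha * (tri 1 x one_ne_zero)⁻¹ * (tri a b ha)⁻¹
      = tri 1 (x * (1 - a * a)) one_ne_zero := by
  rw [tri_inv, tri_inv, tri_mul, tri_mul, tri_mul]
  apply tri_congr
  · field_simp
  · field_simp
    ring

/-- upper unitriangular element, as an element of the Borel -/
def uu (x : F) : borel F := ⟨tri 1 x one_ne_zero, tri_mem_borel 1 x one_ne_zero⟩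

lemma uu_comm_eq (x a b : F) (ha : a ≠ 0) (hm : tri a b ha ∈ borel F) :
    ⁅uu x, (⟨tri a b ha, hm⟩ : borel F)⁆ = uu (x * (1 - a * a)) := by
  apply Subtype.ext
  rw [commutatorElement_def]
  push_cast [uu]
  exact comm_tri x a b ha

lemma nilpotent_normal_le {K : Subgroup (borel F)} (hn : K.Normal)
    (hnil : Group.IsNilpotent K) {k : borel F} (hk : k ∈ K) :
    (↑↑k : Matrix (Fin 2) (Fin 2) F) 0 0 * (↑↑k : Matrix (Fin 2) (Fin 2) F) 0 0 = 1 := by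
  by_contra ha2
  have ha : (↑↑k : Matrix (Fin 2) (Fin 2) F) 0 0 ≠ 0 := a00_ne_zero k.2
  have h1a : 1 - (↑↑k : Matrix (Fin 2) (Fin 2) F) 0 0 * (↑↑k : Matrix (Fin 2) (Fin 2) F) 0 0 ≠ 0 :=
    sub_ne_zero.mpr (Ne.symm ha2)
  have hk_eq : k = ⟨tri ((↑↑k : Matrix (Fin 2) (Fin 2) F) 0 0)
      ((↑↑k : Matrix (Fin 2) (Fin 2) F) 0 1) ha, tri_mem_borel _ _ _⟩ := by
    apply Subtype.ext
    exact mem_borel_iff_tri k.2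
  -- every unitriangular is a commutator with k
  have hcomm : ∀ x : F, ⁅uu (x / (1 - (↑↑k : Matrix (Fin 2) (Fin 2) F) 0 0 *
      (↑↑k : Matrix (Fin 2) (Fin 2) F) 0 0)), k⁆ = uu x := by
    intro x
    conv_lhs => rw [hk_eq]
    rw [uu_comm_eq]
    congr 1
    rw [tri_apply00]
    field_simp
    exact mul_div_cancel_right₀ x (by rw [pow_two]; exact h1a)
  have hu : ∀ x : F, uu x ∈ K := by
    intro x
    rw [← hcomm x, commutatorElement_def]
    exact mul_mem (hn.conj_mem k hk (uu _)) (inv_mem hk)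
  have hlcs : ∀ n : ℕ, ∀ x : F, (⟨uu x, hu x⟩ : K) ∈ Subgroup.lowerCentralSeries (⊤ : Subgroup K) n := by
    intro n
    induction n with
    | zero => intro x; exact Subgroup.mem_top _
    | succ n ih =>
      intro x
      rw [_root_.lowerCentralSeries_succ]
      have : (⟨uu x, hu x⟩ : K) = ⁅(⟨uu (x / (1 - (↑↑k : Matrix (Fin 2) (Fin 2) F) 0 0 *
          (↑↑k : Matrix (Fin 2) (Fin 2) F) 0 0)), hu _⟩ : K), (⟨k, hk⟩ : K)⁆ := by
        apply Subtype.ext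
        rw [commutatorElement_def]
        push_cast
        rw [← commutatorElement_def, hcomm x]
      rw [this]
      exact Subgroup.commutator_mem_commutator (ih _) (Subgroup.mem_top _)
  obtain ⟨n, hbot⟩ := _root_.nilpotent_iff_lowerCentralSeries.mp hnil
  have h1 : (⟨uu 1, hu 1⟩ : K) = 1 := by
    have := hlcs n 1
    rw [hbot] at this
    exact Subgroup.mem_bot.mp this
  have h2 : uu (1 : F) = 1 := by
    simpa using Subtype.ext_iff.mp h1
  have h3 : tri (1:F) 1 one_ne_zero = tri 1 0 one_ne_zero := by
    rw [tri_one]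
    simpa [uu] using Subtype.ext_iff.mp h2
  exact one_ne_zero (tri_inj h3).2

lemma delta_surjective : Function.Surjective (delta (F := F)) := by
  intro a
  refine ⟨⟨tri (a : F) 0 a.ne_zero, tri_mem_borel _ _ _⟩, ?_⟩
  apply Units.ext
  rw [delta_apply_val]
  simp [tri]

variable (F) in
/-- square roots of unity in `Fˣ` -/
def sqOne : Subgroup Fˣ where
  carrier := {x | x * x = 1}
  one_mem' := by simp
  mul_mem' := by
    intro a b ha hb
    simp only [Set.mem_setOf_eq] at *
    rw [mul_mul_mul_comm, ha, hb, one_mul]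
  inv_mem' := by
    intro a ha
    simp only [Set.mem_setOf_eq] at *
    rw [← mul_inv, ha, inv_one]

lemma sqOne_cases (x : Fˣ) (hx : x ∈ sqOne F) : x = 1 ∨ x = -1 := by
  have : (x : F) * (x : F) = 1 := by
    have := congrArg Units.val hx
    push_cast at this
    exact this
  rcases mul_self_eq_one_iff.mp this with h | h
  · left; exact Units.ext h
  · right
    apply Units.ext
    rw [h, Units.val_neg, Units.val_one]

lemma card_sqOne_le : Nat.card (sqOne F) ≤ 2 := by
  classical
  have h2 : Nat.card Bool = 2 := by simp
  rw [← h2]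
  apply Nat.card_le_card_of_injective (fun x : (sqOne F) => decide ((x : Fˣ) = 1))
  intro x y hxy
  have hiff := decide_eq_decide.mp hxy
  rcases sqOne_cases _ x.2 with h | h
  · exact Subtype.ext (h.trans (hiff.mp h).symm)
  · rcases sqOne_cases _ y.2 with h' | h'
    · exact Subtype.ext ((hiff.mpr h').trans h'.symm)
    · exact Subtype.ext (h.trans h'.symm)

lemma key_bound [Fintype F] {W : Type*} [Group W] [Finite W]
    (ρ : W →* (Matrix.SpecialLinearGroup (Fin 2) F ⧸
      Subgroup.center (Matrix.SpecialLinearGroup (Fin 2) F)))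
    (hρ : ρ.range = (borel F).map (QuotientGroup.mk'
      (Subgroup.center (Matrix.SpecialLinearGroup (Fin 2) F))))
    (N' : Subgroup W) (hN : N'.Normal) (hnil : Group.IsNilpotent N') :
    Nat.card Fˣ ≤ 2 * N'.index := by
  haveI : Finite (Matrix.SpecialLinearGroup (Fin 2) F) :=
    inferInstanceAs (Finite {A : Matrix (Fin 2) (Fin 2) F // A.det = 1})
  set SL := Matrix.SpecialLinearGroup (Fin 2) F
  set π : SL →* SL ⧸ Subgroup.center SL := QuotientGroup.mk' (Subgroup.center SL) with hπ
  set φ : borel F →* SL ⧸ Subgroup.center SL := π.comp (borel F).subtype with hφ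
  have hφr : φ.range = (borel F).map π := by
    rw [hφ, MonoidHom.range_comp, Subgroup.range_subtype]
  set Kb : Subgroup (SL ⧸ Subgroup.center SL) := N'.map ρ with hKb
  set K : Subgroup (borel F) := Kb.comap φ with hK
  -- K is normal in the Borel
  have hKnorm : K.Normal := by
    constructor
    intro n hn g
    rw [hK, Subgroup.mem_comap] at hn ⊢
    obtain ⟨m, hm, hmn⟩ := hn
    have hg : φ g ∈ ρ.range := by
      rw [hρ, ← hφr]
      exact ⟨g, rfl⟩
    obtain ⟨w, hw⟩ := hg
    refine ⟨w * m * w⁻¹, hN.conj_mem m hm w, ?_⟩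
    simp only [_root_.map_mul, map_inv, hw, hmn]
  -- K is nilpotent
  have hKnil : Group.IsNilpotent K := by
    haveI hKbnil : Group.IsNilpotent Kb := by
      have hmem : ∀ x : N', ρ (N'.subtype x) ∈ Kb := fun x => ⟨x, x.2, rfl⟩
      apply nilpotent_of_surjective ((ρ.comp N'.subtype).codRestrict Kb hmem)
      rintro ⟨y, hy⟩
      obtain ⟨m, hm, hmy⟩ := hy
      exact ⟨⟨m, hm⟩, Subtype.ext hmy⟩
    have hmem : ∀ x : K, φ (K.subtype x) ∈ Kb := fun x => x.2
    set χ : K →* Kb := (φ.comp K.subtype).codRestrict Kb hmem with hχ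
    apply _root_.isNilpotent_of_ker_le_center χ
    · intro x hx
      have hx1 : φ (x : borel F) = 1 := by
        have := congrArg Subtype.val (MonoidHom.mem_ker.mp hx)
        exact this
      have hxc : ((x : borel F) : SL) ∈ Subgroup.center SL := by
        have : ((x : borel F) : SL) ∈ π.ker := hx1
        rwa [hπ, QuotientGroup.ker_mk'] at this
      rw [Subgroup.mem_center_iff]
      intro g
      apply Subtype.ext
      apply Subtype.ext
      exact (Subgroup.mem_center_iff.mp hxc ((g : borel F) : SL))
  -- K has small index
  have hKind : K.index ≤ N'.index := by
    have h1 : K.index = Kb.relIndex φ.range := Subgroup.index_comap Kb φ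
    have h2 : (Kb.comap ρ).index = Kb.relIndex ρ.range := Subgroup.index_comap Kb ρ
    have h3 : N' ≤ Kb.comap ρ := fun m hm => ⟨m, hm, rfl⟩
    have h4 : (Kb.comap ρ).index ∣ N'.index := Subgroup.index_dvd_of_le h3
    have h5 : φ.range = ρ.range := by rw [hρ, hφr]
    rw [h1, h5, ← h2]
    exact Nat.le_of_dvd (Nat.pos_of_ne_zero Subgroup.index_ne_zero_of_finite) h4
  -- K is contained in the preimage of the square roots of unity
  have hKD : K ≤ (sqOne F).comap (delta (F := F)) := by
    intro k hk
    rw [Subgroup.mem_comap]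
    have := nilpotent_normal_le hKnorm hKnil hk
    apply Units.ext
    push_cast
    rw [delta_apply_val]
    exact this
  -- index chase
  have hD : ((sqOne F).comap (delta (F := F))).index = (sqOne F).index :=
    (sqOne F).index_comap_of_surjective delta_surjective
  have hDK : ((sqOne F).comap (delta (F := F))).index ≤ K.index :=
    Nat.le_of_dvd (Nat.pos_of_ne_zero Subgroup.index_ne_zero_of_finite)
      (Subgroup.index_dvd_of_le hKD)
  have hcard : (sqOne F).index * Nat.card (sqOne F) = Nat.card Fˣ :=
    Subgroup.index_mul_card (sqOne F)
  calc Nat.card Fˣ = (sqOne F).index * Nat.card (sqOne F) := hcard.symm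
    _ ≤ (sqOne F).index * 2 := Nat.mul_le_mul_left _ card_sqOne_le
    _ = 2 * (sqOne F).index := by ring
    _ ≤ 2 * N'.index := by
        apply Nat.mul_le_mul_left
        rw [← hD]
        exact le_trans hDK hKind

lemma card_lt_of_lt {X : Type*} [Group X] [Finite X] {A B : Subgroup X} (h : A < B) :
    Nat.card A < Nat.card B := by
  have hss : (A : Set X) ⊂ (B : Set X) := by
    constructor
    · exact fun x hx => h.le hx
    · intro hBA
      exact h.ne (le_antisymm h.le (fun x hx => hBA hx))
  simp only [← SetLike.coe_sort_coe, Nat.card_coe_set_eq]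
  exact Set.ncard_lt_ncard hss (Set.toFinite _)

lemma solvable_lift {X : Type*} [Group X] [Finite X] {Y : Type*} [Group Y] (f : X →* Y)
    (hs : Group.IsSolvable f.range) : ∃ T : Subgroup X, Group.IsSolvable T ∧ T.map f = f.range := by
  classical
  -- the set of "supplements"
  set 𝒮 : Set (Subgroup X) := {T | T.map f = f.range} with h𝒮
  have htop : (⊤ : Subgroup X) ∈ 𝒮 := (f.range_eq_map).symm
  obtain ⟨T, hT𝒮, hTmin⟩ := Set.Finite.exists_minimalFor (fun T : Subgroup X => Nat.card T)
    𝒮 (Set.toFinite 𝒮) ⟨⊤, htop⟩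
  refine ⟨T, ?_, hT𝒮⟩
  set g : T →* Y := f.comp T.subtype with hg
  have hgr : g.range = f.range := by
    rw [hg, MonoidHom.range_comp, Subgroup.range_subtype, hT𝒮]
  -- the kernel of g is contained in the Frattini subgroup of T
  have hker : g.ker ≤ frattini T := by
    apply le_iInf₂
    intro M hM
    by_contra hno
    have hsup : M ⊔ g.ker = ⊤ := hM.2 _ (lt_of_le_of_ne le_sup_left
      (fun hEq => hno (hEq ▸ le_sup_right)))
    have hMg : M.map g = g.range := by
      rw [MonoidHom.range_eq_map, ← hsup, Subgroup.map_sup,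
        (Subgroup.map_eq_bot_iff g.ker).mpr le_rfl, sup_bot_eq]
    -- then M pushed into X is a smaller supplement
    have hM𝒮 : M.map T.subtype ∈ 𝒮 := by
      rw [h𝒮, Set.mem_setOf_eq, Subgroup.map_map]
      rw [← hg, hMg, hgr]
    have hcard : Nat.card (M.map T.subtype) < Nat.card T := by
      have h1 : Nat.card (M.map T.subtype) = Nat.card M :=
        (Nat.card_congr (Subgroup.equivMapOfInjective M T.subtype
          T.subtype_injective).toEquiv).symm
      rw [h1, ← Subgroup.card_top (G := T)]
      exact card_lt_of_lt (lt_of_le_of_ne le_top hM.1)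
    exact absurd (hTmin hM𝒮 hcard.le) (not_le.mpr hcard)
  -- T is solvable: it is an extension of a solvable group by its nilpotent Frattini subgroup
  haveI hfrat : Group.IsNilpotent (frattini T) := frattini_nilpotent
  haveI : Group.IsSolvable (frattini T) := inferInstance
  haveI : Group.IsSolvable g.range := hgr ▸ hs
  haveI : Group.IsSolvable (T ⧸ g.ker) := solvable_of_surjective
    (f := (QuotientGroup.quotientKerEquivRange g).symm.toMonoidHom)
    (QuotientGroup.quotientKerEquivRange g).symm.surjective
  haveI : Group.IsSolvable (T ⧸ frattini T) := by
    apply solvable_of_surjective (f := QuotientGroup.map g.ker (frattini T)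
      (MonoidHom.id T) hker)
    intro y
    obtain ⟨x, rfl⟩ := QuotientGroup.mk_surjective y
    exact ⟨QuotientGroup.mk x, rfl⟩
  exact solvable_of_ker_le_range (frattini T).subtype (QuotientGroup.mk' (frattini T))
    (by rw [QuotientGroup.ker_mk', Subgroup.range_subtype])
end PSLB

open PSLB in
/-- if every soluble subgroup of the finite group `G` contains a
nilpotent normal subgroup of index at most `t`, and `G` has a section
isomorphic to `PSL(2,q)` (for `q` a prime power), then `q ≤ 2t + 1`. -/
theorem psl_section_bound
    (q t : ℕ) (hq : ∃ p k : ℕ, p.Prime ∧ 0 < k ∧ q = p ^ k) (ht : 0 < t)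
    (F : Type) [Field F] [Fintype F] (hF : Fintype.card F = q)
    (G : Type) [Group G] [Finite G]
    (hsol : ∀ S : Subgroup G, IsSolvable S →
      ∃ N : Subgroup S, N.Normal ∧ Group.IsNilpotent N ∧ N.index ≤ t)
    (hsec : ∃ (H : Subgroup G) (N : Subgroup H) (hN : N.Normal),
      letI := hN
      Nonempty ((H ⧸ N) ≃*
        (Matrix.SpecialLinearGroup (Fin 2) F ⧸
          Subgroup.center (Matrix.SpecialLinearGroup (Fin 2) F)))) :
    q ≤ 2 * t + 1 := by
  classical
  obtain ⟨H, N, hN, ⟨e⟩⟩ := hsec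
  haveI := hN
  set SL := Matrix.SpecialLinearGroup (Fin 2) F with hSL
  set PSL := SL ⧸ Subgroup.center SL with hPSL
  set π : SL →* PSL := QuotientGroup.mk' (Subgroup.center SL) with hπ
  set Bbar : Subgroup PSL := (borel F).map π with hBbar
  set ψ : H →* PSL := e.toMonoidHom.comp (QuotientGroup.mk' N) with hψ
  have hψs : Function.Surjective ψ :=
    e.surjective.comp (QuotientGroup.mk_surjective)
  -- Bbar is solvable
  set φ : borel F →* PSL := π.comp (borel F).subtype with hφ
  have hφr : φ.range = Bbar := by
    rw [hφ, MonoidHom.range_comp, Subgroup.range_subtype]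
  haveI hBsol : Group.IsSolvable Bbar := by
    have h1 : Group.IsSolvable φ.range := solvable_of_surjective φ.rangeRestrict_surjective
    rwa [hφr] at h1
  -- pull Bbar back to a subgroup S of H, and find a solvable supplement T
  set S : Subgroup H := Bbar.comap ψ with hS
  set f : S →* PSL := ψ.comp S.subtype with hf
  have hfr : f.range = Bbar := by
    rw [hf, MonoidHom.range_comp, Subgroup.range_subtype]
    exact Subgroup.map_comap_eq_self_of_surjective hψs Bbar
  haveI : Group.IsSolvable f.range := hfr ▸ hBsol
  obtain ⟨T, hTsol, hTmap⟩ := solvable_lift f inferInstance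
  -- transport T into G
  set ι : T →* G := (H.subtype.comp S.subtype).comp T.subtype with hι
  have hιinj : Function.Injective ι := by
    intro a b hab
    exact Subtype.ext (Subtype.ext (Subtype.ext hab))
  set e2 : T ≃* ι.range := MonoidHom.ofInjective hιinj with he2
  haveI : Group.IsSolvable T := hTsol
  haveI : Group.IsSolvable ι.range := solvable_of_surjective
    (f := e2.toMonoidHom) e2.surjective
  obtain ⟨N', hN'norm, hN'nil, hN'ind⟩ := hsol ι.range (inferInstanceAs (Group.IsSolvable ι.range))
  -- the natural map from ι.range onto Bbar
  set μ : T →* PSL := f.comp T.subtype with hμ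
  set ρ : ι.range →* PSL := μ.comp e2.symm.toMonoidHom with hρd
  have hρr : ρ.range = Bbar := by
    rw [hρd, MonoidHom.range_comp]
    have h1 : e2.symm.toMonoidHom.range = (⊤ : Subgroup T) :=
      MonoidHom.range_eq_top.mpr e2.symm.surjective
    rw [h1, ← MonoidHom.range_eq_map, hμ, MonoidHom.range_comp, Subgroup.range_subtype, hTmap,
      hfr]
  -- apply the main bound
  have hkey : Nat.card Fˣ ≤ 2 * N'.index := key_bound ρ hρr N' hN'norm hN'nil
  have hcard : Nat.card Fˣ = q - 1 := by
    rw [Nat.card_eq_fintype_card, Fintype.card_units, hF]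
  have hq1 : 1 ≤ q := by
    obtain ⟨p, k, hp, hk, rfl⟩ := hq
    exact pow_pos hp.pos k
  have : q - 1 ≤ 2 * t := by
    rw [← hcard]
    exact le_trans hkey (Nat.mul_le_mul_left 2 hN'ind)
  omega
end

section
/- Let A ≅ Aff(E,C) be a group of affine cyclic type. Assume that a finite group G has a normal subgroup N with G/N ≅ A, and that no proper subgroup of G has a quotient isomorphic to A. Then G is of the form P ⋊ ℤ_m, where P is a p-group for some prime p, m is a power of a prime q ≠ p, and the image of ℤ_m under the conjugation homomorphism ℤ_m → Aut(P) has order at least |C|. -/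
/-- A group is elementary abelian for the prime `p` if it is commutative and
every element has order dividing `p`. -/
def IsElementaryAbelian (p : ℕ) (P : Type*) [Group P] : Prop :=
  (∀ x y : P, x * y = y * x) ∧ ∀ x : P, x ^ p = 1

/-- if a finite group `G` has a quotient isomorphic to a group
`A = Aff(E,C)` of affine cyclic type, while no proper subgroup of `G` has a
quotient isomorphic to `A`, then `G` is an (internal) semidirect product
`P ⋊ ℤ_m` with `P` a `p`-group, `m` a power of a prime `q ≠ p`, and the image
of `ℤ_m` in `Aut(P)` of order at least `|C|`. -/
theorem minimal_group_with_affine_cyclic_quotient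
    (p₀ q₀ k₀ : ℕ) (hp₀ : p₀.Prime) (hq₀ : q₀.Prime) (hp₀q₀ : p₀ ≠ q₀)
    (E C : Type) [Group E] [Finite E] [Group C] [Finite C]
    (hE : IsElementaryAbelian p₀ E) (hC : IsCyclic C)
    (hCcard : Nat.card C = q₀ ^ k₀)
    (φ : C →* MulAut E) (hφ : Function.Injective φ)
    (G : Type) [Group G] [Finite G]
    (N : Subgroup G) (hN : N.Normal)
    (hquot : letI := hN; Nonempty ((G ⧸ N) ≃* (E ⋊[φ] C)))
    (hmin : ∀ H : Subgroup G, H ≠ ⊤ → ∀ (M : Subgroup H) (hM : M.Normal),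
      letI := hM; ¬ Nonempty ((H ⧸ M) ≃* (E ⋊[φ] C))) :
    ∃ p q : ℕ, p.Prime ∧ q.Prime ∧ p ≠ q ∧
      ∃ (P Q : Subgroup G) (m : ℕ),
        P.Normal ∧ IsPGroup p P ∧
        IsCyclic Q ∧ Nat.card Q = m ∧ (∃ k : ℕ, m = q ^ k) ∧
        P ⊓ Q = ⊥ ∧ P ⊔ Q = ⊤ ∧
        Nat.card C ≤ (Subgroup.centralizer (P : Set G)).relIndex Q := by
  classical
  haveI := hN
  haveI : Fact p₀.Prime := ⟨hp₀⟩
  haveI : Fact q₀.Prime := ⟨hq₀⟩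
  obtain ⟨e⟩ := hquot
  let f : G →* E ⋊[φ] C := e.toMonoidHom.comp (QuotientGroup.mk' N)
  have hfsurj : Function.Surjective f :=
    e.surjective.comp (QuotientGroup.mk'_surjective N)
  -- minimality: any subgroup mapping onto A is everything
  have min_top : ∀ H : Subgroup G, Subgroup.map f H = ⊤ → H = ⊤ := by
    intro H hH
    by_contra hne
    have hsurj : Function.Surjective (f.comp H.subtype) := by
      rw [← MonoidHom.range_eq_top, MonoidHom.range_comp, Subgroup.range_subtype, hH]
    exact hmin H hne (f.comp H.subtype).ker inferInstance
      ⟨QuotientGroup.quotientKerEquivOfSurjective _ hsurj⟩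
  -- the projection to C
  let χ : G →* C := SemidirectProduct.rightHom.comp f
  -- a generator of C
  obtain ⟨c₀, hc₀⟩ := hC.exists_generator
  have hc₀ord : orderOf c₀ = q₀ ^ k₀ := by
    rw [orderOf_eq_card_of_forall_mem_zpowers hc₀, hCcard]
  obtain ⟨x, hx⟩ := hfsurj (SemidirectProduct.inr c₀)
  have hxc : χ x = c₀ := by
    show SemidirectProduct.rightHom (f x) = c₀
    rw [hx, SemidirectProduct.rightHom_inr]
  -- the q-part of x
  set n := orderOf x with hn_def
  have hn : n ≠ 0 := (orderOf_pos x).ne'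
  set a := n.factorization q₀ with ha_def
  set m' := n / q₀ ^ a with hm'_def
  set g := x ^ m' with hg_def
  have hm'dvd : m' ∣ n := Nat.ordCompl_dvd n q₀
  have hm'pos : 0 < m' := Nat.ordCompl_pos q₀ hn
  have hnm : q₀ ^ a * m' = n := Nat.ordProj_mul_ordCompl_eq_self n q₀
  have hordg : orderOf g = q₀ ^ a := by
    rw [hg_def, orderOf_pow, ← hn_def, Nat.gcd_eq_right hm'dvd,
      Nat.div_eq_of_eq_mul_left hm'pos hnm.symm]
  have hq'm : ¬ q₀ ∣ m' := Nat.not_dvd_ordCompl hq₀ hn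
  have hχg : χ g = c₀ ^ m' := by rw [hg_def, map_pow, hxc]
  -- χ g generates C
  have hgen : Subgroup.zpowers (χ g) = ⊤ := by
    apply Subgroup.eq_top_of_card_eq
    have hcop : Nat.Coprime (q₀ ^ k₀) m' :=
      Nat.Coprime.pow_left k₀ (hq₀.coprime_iff_not_dvd.mpr hq'm)
    rw [Nat.card_zpowers, hχg, orderOf_pow, hc₀ord, Nat.Coprime.gcd_eq_one hcop,
      Nat.div_one, hCcard]
  -- the normal subgroup M = kernel of χ; its image is E
  set M : Subgroup G := χ.ker with hM_def
  have hfM : Subgroup.map f M = (SemidirectProduct.inl : E →* E ⋊[φ] C).range := by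
    rw [SemidirectProduct.range_inl_eq_ker_rightHom, hM_def]
    show Subgroup.map f (SemidirectProduct.rightHom.comp f).ker = _
    rw [← MonoidHom.comap_ker, Subgroup.map_comap_eq_self_of_surjective hfsurj]
  -- E (hence range inl) is a p₀-group
  have hEp' : IsPGroup p₀ E := fun y => ⟨1, by rw [pow_one]; exact hE.2 y⟩
  have hEp : IsPGroup p₀ (SemidirectProduct.inl : E →* E ⋊[φ] C).range := by
    rw [MonoidHom.range_eq_map]
    exact (hEp'.to_subgroup ⊤).map _
  -- range inl is a Sylow p₀-subgroup of A
  have hidx : ((SemidirectProduct.inl : E →* E ⋊[φ] C).range).index = q₀ ^ k₀ := by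
    rw [SemidirectProduct.range_inl_eq_ker_rightHom, Subgroup.index_ker,
      MonoidHom.range_eq_top.mpr SemidirectProduct.rightHom_surjective,
      Subgroup.card_top, hCcard]
  have hndvd : ¬ p₀ ∣ ((SemidirectProduct.inl : E →* E ⋊[φ] C).range).index := by
    rw [hidx]
    intro h
    exact hp₀q₀ ((Nat.prime_dvd_prime_iff_eq hp₀ hq₀).mp (hp₀.dvd_of_dvd_pow h))
  haveI : Finite (E ⋊[φ] C) := Finite.of_surjective f hfsurj
  let SylE : Sylow p₀ (E ⋊[φ] C) := hEp.toSylow hndvd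
  have hSylEnormal : (SylE : Subgroup (E ⋊[φ] C)).Normal := by
    show ((SemidirectProduct.inl : E →* E ⋊[φ] C).range).Normal
    rw [SemidirectProduct.range_inl_eq_ker_rightHom]
    infer_instance
  haveI : Unique (Sylow p₀ (E ⋊[φ] C)) := Sylow.unique_of_normal SylE hSylEnormal
  -- choose a Sylow p₀-subgroup of G; it lies in M
  obtain ⟨P₀⟩ : Nonempty (Sylow p₀ G) := inferInstance
  have hPM : (P₀ : Subgroup G) ≤ M := by
    intro y hy
    show χ y = 1
    obtain ⟨k, hk⟩ := P₀.2 ⟨y, hy⟩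
    have hyk : y ^ p₀ ^ k = 1 := by
      have := congrArg (fun z : (P₀ : Subgroup G) => (z : G)) hk
      simpa using this
    have h1 : (χ y) ^ p₀ ^ k = 1 := by rw [← map_pow, hyk, map_one]
    have h2 : orderOf (χ y) ∣ p₀ ^ k := orderOf_dvd_of_pow_eq_one h1
    have h3 : orderOf (χ y) ∣ q₀ ^ k₀ := hCcard ▸ orderOf_dvd_natCard (χ y)
    have h4 : Nat.Coprime (p₀ ^ k) (q₀ ^ k₀) :=
      Nat.coprime_pow_primes k k₀ hp₀ hq₀ hp₀q₀
    have : orderOf (χ y) = 1 := Nat.eq_one_of_dvd_coprimes h4 h2 h3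
    exact orderOf_eq_one_iff.mp this
  -- the image of P₀ is exactly range inl
  have hmapP : Subgroup.map f (P₀ : Subgroup G) =
      (SemidirectProduct.inl : E →* E ⋊[φ] C).range := by
    have h1 : P₀.mapSurjective hfsurj = SylE := Subsingleton.elim _ _
    have h2 := congrArg (fun (S : Sylow p₀ (E ⋊[φ] C)) => (S : Subgroup (E ⋊[φ] C))) h1
    have h3 : Subgroup.map f (P₀ : Subgroup G) = ↑SylE := by
      simpa [Sylow.coe_mapSurjective] using h2
    exact h3
  -- P₀ is normal in G (Frattini + minimality)
  have hPnormalizer : Subgroup.normalizer ((P₀ : Subgroup G) : Set G) = ⊤ := by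
    apply min_top
    have hfr : Subgroup.normalizer ((P₀ : Subgroup G) : Set G) ⊔ M = ⊤ := Sylow.normalizer_sup_eq_top' (N := M) P₀ hPM
    have := congrArg (Subgroup.map f) hfr
    rw [Subgroup.map_sup, hfM] at this
    have hle : (SemidirectProduct.inl : E →* E ⋊[φ] C).range ≤
        Subgroup.map f (Subgroup.normalizer ((P₀ : Subgroup G) : Set G)) := by
      rw [← hmapP]
      exact Subgroup.map_mono Subgroup.le_normalizer
    rw [sup_eq_left.mpr hle] at this
    rw [this]
    exact Subgroup.map_top_of_surjective f hfsurj
  have hPnormal : (P₀ : Subgroup G).Normal := Subgroup.normalizer_eq_top_iff.mp hPnormalizer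
  -- Q = ⟨g⟩
  set Q : Subgroup G := Subgroup.zpowers g with hQ_def
  have hQcard : Nat.card Q = q₀ ^ a := by rw [hQ_def, Nat.card_zpowers, hordg]
  have hQp : IsPGroup q₀ Q := IsPGroup.of_card hQcard
  have hQcyc : IsCyclic Q := by
    refine ⟨⟨⟨g, Subgroup.mem_zpowers g⟩, ?_⟩⟩
    rintro ⟨y, hy⟩
    obtain ⟨k, hk⟩ := hy
    exact ⟨k, Subtype.ext (by simpa using hk)⟩
  -- P ⊔ Q = ⊤
  have hsup : (P₀ : Subgroup G) ⊔ Q = ⊤ := by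
    apply min_top
    rw [Subgroup.map_sup, hmapP, hQ_def, MonoidHom.map_zpowers]
    have hker : SemidirectProduct.rightHom.ker ≤
        (SemidirectProduct.inl : E →* E ⋊[φ] C).range ⊔ Subgroup.zpowers (f g) := by
      rw [← SemidirectProduct.range_inl_eq_ker_rightHom]
      exact le_sup_left
    have htop' : Subgroup.map SemidirectProduct.rightHom
        ((SemidirectProduct.inl : E →* E ⋊[φ] C).range ⊔ Subgroup.zpowers (f g)) = ⊤ := by
      rw [eq_top_iff, ← hgen]
      have : Subgroup.zpowers (χ g) =
          Subgroup.map SemidirectProduct.rightHom (Subgroup.zpowers (f g)) := by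
        rw [MonoidHom.map_zpowers]; rfl
      rw [this]
      exact Subgroup.map_mono le_sup_right
    have := congrArg (Subgroup.comap (SemidirectProduct.rightHom :
        E ⋊[φ] C →* C)) htop'
    rw [Subgroup.comap_map_eq, sup_eq_left.mpr hker, Subgroup.comap_top] at this
    exact this
  -- P ⊓ Q = ⊥
  have hinf : (P₀ : Subgroup G) ⊓ Q = ⊥ :=
    (IsPGroup.disjoint_of_ne p₀ q₀ hp₀q₀ _ _ P₀.2 hQp).eq_bot
  -- the centralizer of P is contained in ker χ
  have hcent : Subgroup.centralizer ((P₀ : Subgroup G) : Set G) ≤ χ.ker := by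
    intro d hd
    have hcomm : ∀ e' : E, f d * SemidirectProduct.inl e' =
        SemidirectProduct.inl e' * f d := by
      intro e'
      have : SemidirectProduct.inl e' ∈ Subgroup.map f (P₀ : Subgroup G) := by
        rw [hmapP]; exact ⟨e', rfl⟩
      obtain ⟨z, hz, hfz⟩ := this
      have := hd z hz
      calc f d * SemidirectProduct.inl e' = f d * f z := by rw [hfz]
        _ = f (d * z) := (map_mul f d z).symm
        _ = f (z * d) := by rw [← this]
        _ = f z * f d := map_mul f z d
        _ = SemidirectProduct.inl e' * f d := by rw [hfz]
    show χ d = 1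
    have hright : (f d).right = 1 := by
      have hφ1 : φ (f d).right = 1 := by
        ext e'
        have h := congrArg SemidirectProduct.left (hcomm e')
        simp only [SemidirectProduct.mul_left, SemidirectProduct.left_inl,
          SemidirectProduct.right_inl, map_one, MulAut.one_apply] at h
        -- h : (f d).left * φ (f d).right e' = e' * (f d).left
        have h' : (f d).left * (φ (f d).right) e' = (f d).left * e' := by
          rw [h, hE.1]
        exact mul_left_cancel h'
      have : (f d).right = (1 : C) := hφ (by rw [hφ1, map_one])
      exact this
    show SemidirectProduct.rightHom (f d) = 1
    rw [SemidirectProduct.rightHom_eq_right]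
    exact hright
  -- the relindex bound
  have hrel : Nat.card C ≤ (Subgroup.centralizer
      ((P₀ : Subgroup G) : Set G)).relIndex Q := by
    have h1 : χ.ker.relIndex Q = Nat.card C := by
      rw [Subgroup.relIndex_ker]
      have : Subgroup.map χ Q = ⊤ := by
        rw [eq_top_iff, ← hgen, hQ_def, MonoidHom.map_zpowers]
      rw [this, Subgroup.card_top]
    have h2 : χ.ker.relIndex Q ∣
        (Subgroup.centralizer ((P₀ : Subgroup G) : Set G)).relIndex Q :=
      Subgroup.relIndex_dvd_of_le_left Q hcent
    have h3 : (Subgroup.centralizer ((P₀ : Subgroup G) : Set G)).relIndex Q ≠ 0 :=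
      Subgroup.index_ne_zero_of_finite
    rw [← h1]
    exact Nat.le_of_dvd (Nat.pos_of_ne_zero h3) h2
  exact ⟨p₀, q₀, hp₀, hq₀, hp₀q₀, P₀, Q, q₀ ^ a, hPnormal, P₀.2, hQcyc, hQcard,
    ⟨a, rfl⟩, hinf, hsup, hrel⟩
end

section
/- For every integer n ≥ 2, if A is a commutative subgroup of the Heisenberg type group G_n, then the index [G_n : A] ≥ n. -/
/-- The Heisenberg type group `G_n`: the set `ℤ_n × ℤ_n × ℤ_n` with
multiplication `(a,b,c)·(a',b',c') = (a+a', b+b', c+c'+a·b')`. -/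
@[ext] structure Heisenberg (n : ℕ) where
  a : ZMod n
  b : ZMod n
  c : ZMod n

namespace Heisenberg

variable {n : ℕ}

instance : Mul (Heisenberg n) :=
  ⟨fun x y => ⟨x.a + y.a, x.b + y.b, x.c + y.c + x.a * y.b⟩⟩

instance : One (Heisenberg n) := ⟨⟨0, 0, 0⟩⟩

instance : Inv (Heisenberg n) := ⟨fun x => ⟨-x.a, -x.b, -x.c + x.a * x.b⟩⟩

@[simp] theorem mul_a (x y : Heisenberg n) : (x * y).a = x.a + y.a := rfl
@[simp] theorem mul_b (x y : Heisenberg n) : (x * y).b = x.b + y.b := rfl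
@[simp] theorem mul_c (x y : Heisenberg n) : (x * y).c = x.c + y.c + x.a * y.b := rfl
@[simp] theorem one_a : (1 : Heisenberg n).a = 0 := rfl
@[simp] theorem one_b : (1 : Heisenberg n).b = 0 := rfl
@[simp] theorem one_c : (1 : Heisenberg n).c = 0 := rfl
@[simp] theorem inv_a (x : Heisenberg n) : (x⁻¹).a = -x.a := rfl
@[simp] theorem inv_b (x : Heisenberg n) : (x⁻¹).b = -x.b := rfl
@[simp] theorem inv_c (x : Heisenberg n) : (x⁻¹).c = -x.c + x.a * x.b := rfl

instance instGroup : Group (Heisenberg n) where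
  mul_assoc x y z := by ext <;> simp <;> ring
  one_mul x := by ext <;> simp
  mul_one x := by ext <;> simp
  inv_mul_cancel x := by ext <;> simp

end Heisenberg


-- arithmetic auxiliary lemma
lemma arith_aux {n a b : ℕ} (hn : 0 < n) (h : n ∣ a * b) :
    n / n.gcd a * (n / n.gcd b) ≤ n := by
  set g1 := n.gcd a with hg1def
  set g2 := n.gcd b with hg2def
  have hg1 : 0 < g1 := Nat.gcd_pos_of_pos_left a hn
  have hg2 : 0 < g2 := Nat.gcd_pos_of_pos_left b hn
  have cop : Nat.Coprime (n / g1) (a / g1) := Nat.coprime_div_gcd_div_gcd hg1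
  have h2 : n / g1 ∣ a / g1 * b := by
    have hmul : n / g1 * g1 ∣ (a / g1 * b) * g1 := by
      rw [Nat.div_mul_cancel (Nat.gcd_dvd_left n a), mul_right_comm,
        Nat.div_mul_cancel (Nat.gcd_dvd_right n a)]
      exact h
    exact (mul_dvd_mul_iff_right hg1.ne').mp hmul
  have h3 : n / g1 ∣ b := cop.dvd_of_dvd_mul_left h2
  have h4 : n / g1 ∣ g2 :=
    Nat.dvd_gcd (Nat.div_dvd_of_dvd (Nat.gcd_dvd_left n a)) h3
  have h5 : n / g1 ≤ g2 := Nat.le_of_dvd hg2 h4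
  calc n / g1 * (n / g2) ≤ g2 * (n / g2) := Nat.mul_le_mul_right _ h5
    _ = n := Nat.mul_div_cancel' (Nat.gcd_dvd_left n b)

-- isotropic subgroups of (ZMod n)² have at most n elements
lemma isotropic_card_le {n : ℕ} (hn : 0 < n) (H : AddSubgroup (ZMod n × ZMod n))
    (hH : ∀ x ∈ H, ∀ y ∈ H, x.1 * y.2 = y.1 * x.2) : Nat.card H ≤ n := by
  haveI : NeZero n := ⟨hn.ne'⟩
  classical
  set S : AddSubgroup (ZMod n) := H.map (AddMonoidHom.fst _ _) with hSdef
  set T : AddSubgroup (ZMod n) := H.comap (AddMonoidHom.inr (ZMod n) (ZMod n)) with hTdef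
  have hrep : ∀ s : S, ∃ x, x ∈ H ∧ x.1 = (s : ZMod n) := by
    rintro ⟨s, x, hx, rfl⟩
    exact ⟨x, hx, rfl⟩
  choose r hrH hr1 using hrep
  -- injection H → S × T
  have hcard : Nat.card H ≤ Nat.card S * Nat.card T := by
    have hmemS : ∀ x : H, (x : ZMod n × ZMod n).1 ∈ S := fun x => ⟨x.1, x.2, rfl⟩
    have key : ∀ x : H, (0, (x : ZMod n × ZMod n).2 - (r ⟨(x : ZMod n × ZMod n).1, hmemS x⟩).2)
        = (x : ZMod n × ZMod n) - r ⟨(x : ZMod n × ZMod n).1, hmemS x⟩ := by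
      intro x
      have h1 := hr1 ⟨(x : ZMod n × ZMod n).1, hmemS x⟩
      ext
      · simp [h1]
      · simp
    have hmemT : ∀ x : H, (x : ZMod n × ZMod n).2 - (r ⟨(x : ZMod n × ZMod n).1, hmemS x⟩).2 ∈ T := by
      intro x
      show (AddMonoidHom.inr (ZMod n) (ZMod n)) _ ∈ H
      simp only [AddMonoidHom.inr_apply]
      rw [key x]
      exact sub_mem x.2 (hrH _)
    set Φ : H → S × T := fun x =>
      (⟨(x : ZMod n × ZMod n).1, hmemS x⟩,
       ⟨(x : ZMod n × ZMod n).2 - (r ⟨(x : ZMod n × ZMod n).1, hmemS x⟩).2, hmemT x⟩)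
      with hΦ
    have hinj : Function.Injective Φ := by
      intro x y hxy
      rw [hΦ] at hxy
      obtain ⟨h1, h2⟩ := Prod.mk.injEq .. ▸ hxy
      have ha : (x : ZMod n × ZMod n).1 = (y : ZMod n × ZMod n).1 := congrArg Subtype.val h1
      have hsx : (⟨(x : ZMod n × ZMod n).1, hmemS x⟩ : S) = ⟨(y : ZMod n × ZMod n).1, hmemS y⟩ :=
        Subtype.ext ha
      have h2' := congrArg Subtype.val h2
      simp only [hsx] at h2'
      have hb : (x : ZMod n × ZMod n).2 = (y : ZMod n × ZMod n).2 := by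
        have := sub_left_injective (G := ZMod n) h2'
        exact this
      exact Subtype.ext (Prod.ext ha hb)
    calc Nat.card H ≤ Nat.card (S × T) := Nat.card_le_card_of_injective Φ hinj
      _ = Nat.card S * Nat.card T := Nat.card_prod _ _
  -- generators
  obtain ⟨d, hd⟩ := IsAddCyclic.exists_generator (α := S)
  obtain ⟨e, he⟩ := IsAddCyclic.exists_generator (α := T)
  have hcardS : Nat.card S = addOrderOf (d : ZMod n) := by
    rw [AddSubgroup.addOrderOf_coe, addOrderOf_eq_card_of_forall_mem_zmultiples hd]
  have hcardT : Nat.card T = addOrderOf (e : ZMod n) := by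
    rw [AddSubgroup.addOrderOf_coe, addOrderOf_eq_card_of_forall_mem_zmultiples he]
  -- isotropy gives d * e = 0
  have hde : (d : ZMod n) * (e : ZMod n) = 0 := by
    obtain ⟨x, hxH, hx1⟩ := d.2
    have heH : ((0, (e : ZMod n)) : ZMod n × ZMod n) ∈ H := e.2
    have := hH x hxH (0, (e : ZMod n)) heH
    simp only [zero_mul] at this
    rw [← hx1]
    exact this
  have hdvd : n ∣ (d : ZMod n).val * (e : ZMod n).val := by
    rw [← ZMod.natCast_eq_zero_iff, Nat.cast_mul, ZMod.natCast_zmod_val,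
      ZMod.natCast_zmod_val]
    exact hde
  have hod : addOrderOf (d : ZMod n) = n / n.gcd (d : ZMod n).val := by
    conv_lhs => rw [← ZMod.natCast_zmod_val (d : ZMod n)]
    exact ZMod.addOrderOf_coe _ hn.ne'
  have hoe : addOrderOf (e : ZMod n) = n / n.gcd (e : ZMod n).val := by
    conv_lhs => rw [← ZMod.natCast_zmod_val (e : ZMod n)]
    exact ZMod.addOrderOf_coe _ hn.ne'
  calc Nat.card H ≤ Nat.card S * Nat.card T := hcard
    _ = n / n.gcd (d : ZMod n).val * (n / n.gcd (e : ZMod n).val) := by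
        rw [hcardS, hcardT, hod, hoe]
    _ ≤ n := arith_aux hn hdvd

/-- every commutative subgroup of the Heisenberg type group
`G_n` has index at least `n`. -/
theorem commutative_subgroup_of_heisenberg_index_ge (n : ℕ) (hn : 2 ≤ n)
    (A : Subgroup (Heisenberg n)) (hA : IsMulCommutative A) :
    n ≤ A.index := by
  haveI := hA
  have hn0 : 0 < n := by omega
  haveI : NeZero n := ⟨hn0.ne'⟩
  classical
  -- the image of A in (ZMod n)², as an additive subgroup
  set S : AddSubgroup (ZMod n × ZMod n) :=
    { carrier := {p | ∃ x ∈ A, x.a = p.1 ∧ x.b = p.2}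
      zero_mem' := ⟨1, A.one_mem, rfl, rfl⟩
      add_mem' := by
        rintro p q ⟨x, hx, hx1, hx2⟩ ⟨y, hy, hy1, hy2⟩
        exact ⟨x * y, A.mul_mem hx hy, by simp [hx1, hy1], by simp [hx2, hy2]⟩
      neg_mem' := by
        rintro p ⟨x, hx, hx1, hx2⟩
        exact ⟨x⁻¹, A.inv_mem hx, by simp [hx1], by simp [hx2]⟩ } with hSdef
  have hiso : ∀ p ∈ S, ∀ q ∈ S, p.1 * q.2 = q.1 * p.2 := by
    rintro p ⟨x, hx, hx1, hx2⟩ q ⟨y, hy, hy1, hy2⟩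
    have hcomm : x * y = y * x := Subgroup.mul_comm_of_mem_isMulCommutative A hx hy
    have hc := congrArg Heisenberg.c hcomm
    simp only [Heisenberg.mul_c] at hc
    rw [← hx1, ← hx2, ← hy1, ← hy2]
    linear_combination hc
  -- the central part of A
  set T : Set (ZMod n) := {c | (⟨0, 0, c⟩ : Heisenberg n) ∈ A} with hTdef
  have hrep : ∀ s : S, ∃ x, x ∈ A ∧ x.a = (s : ZMod n × ZMod n).1 ∧
      x.b = (s : ZMod n × ZMod n).2 := fun s => s.2
  choose r hrA hra hrb using hrep
  have hmemS : ∀ x : A, ((x : Heisenberg n).a, (x : Heisenberg n).b) ∈ S :=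
    fun x => ⟨x.1, x.2, rfl, rfl⟩
  have hmemT : ∀ x : A,
      ((x : Heisenberg n) * (r ⟨((x : Heisenberg n).a, (x : Heisenberg n).b), hmemS x⟩)⁻¹).c ∈ T := by
    intro x
    set s : S := ⟨((x : Heisenberg n).a, (x : Heisenberg n).b), hmemS x⟩ with hs
    have hmem : (x : Heisenberg n) * (r s)⁻¹ ∈ A := A.mul_mem x.2 (A.inv_mem (hrA s))
    have heq : (⟨0, 0, ((x : Heisenberg n) * (r s)⁻¹).c⟩ : Heisenberg n)
        = (x : Heisenberg n) * (r s)⁻¹ := by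
      ext
      · simp [hra s]; exact (add_neg_cancel _).symm
      · simp [hrb s]; exact (add_neg_cancel _).symm
      · rfl
    show (⟨0, 0, ((x : Heisenberg n) * (r s)⁻¹).c⟩ : Heisenberg n) ∈ A
    rw [heq]
    exact hmem
  set Φ : A → S × T := fun x =>
    (⟨((x : Heisenberg n).a, (x : Heisenberg n).b), hmemS x⟩,
     ⟨((x : Heisenberg n) * (r ⟨((x : Heisenberg n).a, (x : Heisenberg n).b), hmemS x⟩)⁻¹).c,
      hmemT x⟩) with hΦ
  have hinj : Function.Injective Φ := by
    intro x y hxy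
    rw [hΦ] at hxy
    obtain ⟨h1, h2⟩ := Prod.mk.injEq .. ▸ hxy
    have hab : (((x : Heisenberg n).a, (x : Heisenberg n).b) : ZMod n × ZMod n)
        = (((y : Heisenberg n).a, (y : Heisenberg n).b) : ZMod n × ZMod n) :=
      congrArg Subtype.val h1
    have ha : (x : Heisenberg n).a = (y : Heisenberg n).a := congrArg Prod.fst hab
    have hb : (x : Heisenberg n).b = (y : Heisenberg n).b := congrArg Prod.snd hab
    have hsx : (⟨((x : Heisenberg n).a, (x : Heisenberg n).b), hmemS x⟩ : S)
        = ⟨((y : Heisenberg n).a, (y : Heisenberg n).b), hmemS y⟩ := Subtype.ext hab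
    have h2' := congrArg Subtype.val h2
    simp only [hsx] at h2'
    set w := r ⟨((y : Heisenberg n).a, (y : Heisenberg n).b), hmemS y⟩ with hw
    have heq : (x : Heisenberg n) * w⁻¹ = (y : Heisenberg n) * w⁻¹ := by
      ext
      · simp [ha]
      · simp [hb]
      · exact h2'
    exact Subtype.ext (mul_right_cancel heq)
  have hcardA : Nat.card A ≤ Nat.card S * Nat.card T := by
    calc Nat.card A ≤ Nat.card (S × T) := Nat.card_le_card_of_injective Φ hinj
      _ = Nat.card S * Nat.card T := Nat.card_prod _ _
  have hS : Nat.card S ≤ n := isotropic_card_le hn0 S hiso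
  have hT : Nat.card T ≤ n := by
    calc Nat.card T ≤ Nat.card (ZMod n) :=
          Nat.card_le_card_of_injective Subtype.val Subtype.val_injective
      _ = n := Nat.card_zmod n
  have hA2 : Nat.card A ≤ n ^ 2 := by
    calc Nat.card A ≤ Nat.card S * Nat.card T := hcardA
      _ ≤ n * n := Nat.mul_le_mul hS hT
      _ = n ^ 2 := (sq n).symm
  have hG : Nat.card (Heisenberg n) = n ^ 3 := by
    have e : Heisenberg n ≃ ZMod n × ZMod n × ZMod n :=
      ⟨fun x => (x.a, x.b, x.c), fun p => ⟨p.1, p.2.1, p.2.2⟩, fun x => rfl, fun p => rfl⟩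
    rw [Nat.card_congr e, Nat.card_prod, Nat.card_prod, Nat.card_zmod]
    ring
  have hmul : A.index * Nat.card A = n ^ 3 := by
    rw [Subgroup.index_mul_card, hG]
  have hle : n * n ^ 2 ≤ A.index * n ^ 2 := by
    calc n * n ^ 2 = n ^ 3 := by ring
      _ = A.index * Nat.card A := hmul.symm
      _ ≤ A.index * n ^ 2 := Nat.mul_le_mul_left _ hA2
  exact Nat.le_of_mul_le_mul_right hle (by positivity)
end

section
/- Fix an integer n ≥ 2. Let ℤ² act on ℝ² × S¹ by Φ_n((k,l),(x,y,z)) = (x+k, y+l, e^{2πi k n y}·z), where S¹ is the unit circle in ℂ, and let E_n be the quotient space (ℝ² × S¹)/Φ_n(ℤ²), with ⟨x,y,z⟩ denoting the orbit of (x,y,z). Then the formula Ψ_n(([k],[l],[m]), ⟨x,y,z⟩) = ⟨x + k/n, y + l/n, e^{2πi(k y + m/n)}·z⟩ is a well-defined, effective, continuous action of the Heisenberg type group G_n on E_n by homeomorphisms. -/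
open Real

/-- The action `Φ_n` of `(k,l) ∈ ℤ²` on `ℝ² × S¹`:
`Φ_n((k,l),(x,y,z)) = (x+k, y+l, e^{2πi k n y}·z)`. -/
noncomputable def deckMap (n : ℕ) (k l : ℤ) (v : ℝ × ℝ × Circle) : ℝ × ℝ × Circle :=
  (v.1 + k, v.2.1 + l, Circle.exp (2 * π * ((k : ℝ) * (n : ℝ) * v.2.1)) * v.2.2)

/-- Two points of `ℝ² × S¹` are related if some element of `Φ_n(ℤ²)` maps one
to the other. -/
def deckRel (n : ℕ) (v w : ℝ × ℝ × Circle) : Prop :=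
  ∃ k l : ℤ, deckMap n k l v = w

/-- The total space `E_n = (ℝ² × S¹)/Φ_n(ℤ²)`. -/
def BundleSpace (n : ℕ) : Type := Quot (deckRel n)

instance (n : ℕ) : TopologicalSpace (BundleSpace n) :=
  inferInstanceAs (TopologicalSpace (Quot (deckRel n)))

section Aux

namespace HeisAux

/-- `exp` is invariant under shifting the argument by an integer multiple of `2π`. -/
lemma exp_congr {θ₁ θ₂ : ℝ} (j : ℤ) (h : θ₁ = θ₂ + j * (2 * π)) :
    Circle.exp θ₁ = Circle.exp θ₂ := by
  rw [h, Circle.exp_add, Circle.exp_int_mul_two_pi, mul_one]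

lemma deckMap_comp (n : ℕ) (a b a' b' : ℤ) (v : ℝ × ℝ × Circle) :
    deckMap n a b (deckMap n a' b' v) = deckMap n (a + a') (b + b') v := by
  obtain ⟨x, y, z⟩ := v
  simp only [deckMap, ← mul_assoc, ← Circle.exp_add]
  exact Prod.ext (by push_cast; ring) (Prod.ext (by push_cast; ring)
    (congrArg (· * z) (exp_congr (a * n * b') (by push_cast; ring))))

lemma deckMap_zero (n : ℕ) (v : ℝ × ℝ × Circle) : deckMap n 0 0 v = v := by
  obtain ⟨x, y, z⟩ := v
  simp [deckMap]

lemma deckRel_equiv (n : ℕ) : Equivalence (deckRel n) := by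
  constructor
  · exact fun v => ⟨0, 0, deckMap_zero n v⟩
  · rintro v w ⟨a, b, rfl⟩
    exact ⟨-a, -b, by rw [deckMap_comp]; simpa using deckMap_zero n v⟩
  · rintro u v w ⟨a, b, rfl⟩ ⟨a', b', rfl⟩
    exact ⟨a' + a, b' + b, (deckMap_comp n a' b' a b u).symm⟩

lemma quot_mk_eq_iff (n : ℕ) (v w : ℝ × ℝ × Circle) :
    Quot.mk (deckRel n) v = Quot.mk (deckRel n) w ↔ deckRel n v w := by
  rw [Quot.eq, (deckRel_equiv n).eqvGen_iff]

/-- The lifted action of integer triples on `ℝ² × S¹`. -/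
noncomputable def psiMap (n : ℕ) (k l m : ℤ) (v : ℝ × ℝ × Circle) : ℝ × ℝ × Circle :=
  (v.1 + (k : ℝ) / (n : ℝ), v.2.1 + (l : ℝ) / (n : ℝ),
    Circle.exp (2 * π * ((k : ℝ) * v.2.1 + (m : ℝ) / (n : ℝ))) * v.2.2)

lemma continuous_psiMap (n : ℕ) (k l m : ℤ) : Continuous (psiMap n k l m) := by
  unfold psiMap
  fun_prop

lemma intCast_val {n : ℕ} [NeZero n] (a : ZMod n) : (((a.val : ℤ)) : ZMod n) = a := by
  push_cast
  simp [ZMod.natCast_val, ZMod.cast_id]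

variable {n : ℕ} (hn : (n : ℝ) ≠ 0)
include hn

lemma psiMap_deckMap (k l m a b : ℤ) (v : ℝ × ℝ × Circle) :
    psiMap n k l m (deckMap n a b v) = deckMap n a b (psiMap n k l m v) := by
  obtain ⟨x, y, z⟩ := v
  simp only [psiMap, deckMap, ← mul_assoc, ← Circle.exp_add]
  exact Prod.ext (by push_cast; ring) (Prod.ext (by push_cast; ring)
    (congrArg (· * z) (exp_congr (k * b - a * l) (by push_cast; field_simp; ring))))

lemma psiMap_comp (k l m k' l' m' : ℤ) (v : ℝ × ℝ × Circle) :
    psiMap n k l m (psiMap n k' l' m' v) =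
      psiMap n (k + k') (l + l') (m + m' + k * l') v := by
  obtain ⟨x, y, z⟩ := v
  simp only [psiMap, ← mul_assoc, ← Circle.exp_add]
  exact Prod.ext (by push_cast; field_simp; ring) (Prod.ext (by push_cast; field_simp; ring)
    (congrArg (· * z) (congrArg Circle.exp (by push_cast; field_simp; ring))))

lemma psiMap_zero (v : ℝ × ℝ × Circle) : psiMap n 0 0 0 v = v := by
  obtain ⟨x, y, z⟩ := v
  simp [psiMap]

lemma psiMap_congr {k l m k' l' m' : ℤ} (hk : (k : ZMod n) = (k' : ZMod n))
    (hl : (l : ZMod n) = (l' : ZMod n)) (hm : (m : ZMod n) = (m' : ZMod n))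
    (v : ℝ × ℝ × Circle) :
    deckRel n (psiMap n k l m v) (psiMap n k' l' m' v) := by
  obtain ⟨a, ha⟩ : (n : ℤ) ∣ (k' - k) := (ZMod.intCast_eq_intCast_iff k k' n).mp hk |>.dvd
  obtain ⟨b, hb⟩ : (n : ℤ) ∣ (l' - l) := (ZMod.intCast_eq_intCast_iff l l' n).mp hl |>.dvd
  obtain ⟨c, hc⟩ : (n : ℤ) ∣ (m' - m) := (ZMod.intCast_eq_intCast_iff m m' n).mp hm |>.dvd
  refine ⟨a, b, ?_⟩
  obtain ⟨x, y, z⟩ := v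
  have hk' : (k' : ℝ) = k + n * a := by exact_mod_cast congrArg (Int.cast : ℤ → ℝ) (by omega : k' = k + n * a)
  have hl' : (l' : ℝ) = l + n * b := by exact_mod_cast congrArg (Int.cast : ℤ → ℝ) (by omega : l' = l + n * b)
  have hm' : (m' : ℝ) = m + n * c := by exact_mod_cast congrArg (Int.cast : ℤ → ℝ) (by omega : m' = m + n * c)
  simp only [psiMap, deckMap, ← mul_assoc, ← Circle.exp_add]
  exact Prod.ext (by rw [hk']; field_simp; ring) (Prod.ext (by rw [hl']; field_simp; ring)
    (congrArg (· * z) (exp_congr (a * l - c) (by rw [hk', hm']; push_cast; field_simp; ring))))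

/-- The action of an integer triple on the quotient. -/
noncomputable def act (k l m : ℤ) : BundleSpace n → BundleSpace n :=
  Quot.map (psiMap n k l m) (by
    rintro v w ⟨a, b, rfl⟩
    exact ⟨a, b, (psiMap_deckMap hn k l m a b v).symm⟩)

lemma act_mk (k l m : ℤ) (v : ℝ × ℝ × Circle) :
    act hn k l m (Quot.mk (deckRel n) v) = Quot.mk (deckRel n) (psiMap n k l m v) := rfl

lemma continuous_act (k l m : ℤ) : Continuous (act hn k l m) :=
  continuous_quot_lift _ ((continuous_quot_mk).comp (continuous_psiMap n k l m))

lemma act_comp (k l m k' l' m' : ℤ) (x : BundleSpace n) :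
    act hn k l m (act hn k' l' m' x) = act hn (k + k') (l + l') (m + m' + k * l') x := by
  induction x using Quot.ind with
  | mk v => simp only [act_mk, psiMap_comp hn]; rfl

lemma act_zero (x : BundleSpace n) : act hn 0 0 0 x = x := by
  induction x using Quot.ind with
  | mk v => rw [act_mk, psiMap_zero hn]

lemma act_congr {k l m k' l' m' : ℤ} (hk : (k : ZMod n) = (k' : ZMod n))
    (hl : (l : ZMod n) = (l' : ZMod n)) (hm : (m : ZMod n) = (m' : ZMod n))
    (x : BundleSpace n) : act hn k l m x = act hn k' l' m' x := by
  induction x using Quot.ind with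
  | mk v => exact Quot.sound (psiMap_congr hn hk hl hm v)

/-- The homeomorphism of `BundleSpace n` induced by `g : Heisenberg n`. -/
noncomputable def heisHomeo [NeZero n] (g : Heisenberg n) :
    BundleSpace n ≃ₜ BundleSpace n where
  toFun := act hn (g.a.val : ℤ) (g.b.val : ℤ) (g.c.val : ℤ)
  invFun := act hn ((g⁻¹).a.val : ℤ) ((g⁻¹).b.val : ℤ) ((g⁻¹).c.val : ℤ)
  left_inv x := by
    rw [act_comp, act_congr hn (k' := 0) (l' := 0) (m' := 0)
      (by simp [intCast_val]) (by simp [intCast_val])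
      (by simp [intCast_val]) x, act_zero]
  right_inv x := by
    rw [act_comp, act_congr hn (k' := 0) (l' := 0) (m' := 0)
      (by simp [intCast_val]) (by simp [intCast_val])
      (by simp [intCast_val]) x, act_zero]
  continuous_toFun := continuous_act hn _ _ _
  continuous_invFun := continuous_act hn _ _ _

lemma heisHomeo_apply [NeZero n] (g : Heisenberg n) (x : BundleSpace n) :
    heisHomeo hn g x = act hn (g.a.val : ℤ) (g.b.val : ℤ) (g.c.val : ℤ) x := rfl

end HeisAux

end Aux

set_option maxHeartbeats 1000000 in
/-- the formula
`Ψ_n(([k],[l],[m]), ⟨x,y,z⟩) = ⟨x + k/n, y + l/n, e^{2πi(k y + m/n)}·z⟩`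
gives a well-defined, effective, continuous action of the Heisenberg type
group `G_n` on `E_n` by homeomorphisms. -/
theorem heisenberg_action_on_bundle (n : ℕ) (hn : 2 ≤ n) :
    ∃ f : Heisenberg n → (BundleSpace n ≃ₜ BundleSpace n),
      (∀ g h : Heisenberg n, ∀ x : BundleSpace n, f (g * h) x = f g (f h x)) ∧
      (∀ x : BundleSpace n, f 1 x = x) ∧
      Function.Injective f ∧
      (∀ (k l m : ℤ) (x y : ℝ) (z : Circle),
        f ⟨(k : ZMod n), (l : ZMod n), (m : ZMod n)⟩
            (Quot.mk (deckRel n) (x, y, z)) =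
          Quot.mk (deckRel n)
            (x + (k : ℝ) / (n : ℝ), y + (l : ℝ) / (n : ℝ),
              Circle.exp (2 * π * ((k : ℝ) * y + (m : ℝ) / (n : ℝ))) * z)) := by
  haveI : NeZero n := ⟨by omega⟩
  have hn0 : (n : ℝ) ≠ 0 := Nat.cast_ne_zero.mpr (by omega)
  open HeisAux in
  refine ⟨heisHomeo hn0, ?_, ?_, ?_, ?_⟩
  · intro g h x
    rw [heisHomeo_apply, heisHomeo_apply, heisHomeo_apply, act_comp]
    exact act_congr hn0 (by simp [intCast_val]) (by simp [intCast_val])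
      (by simp [intCast_val]) x
  · intro x
    rw [heisHomeo_apply]
    rw [act_congr hn0 (k' := 0) (l' := 0) (m' := 0)
      (by simp [intCast_val]) (by simp [intCast_val]) (by simp [intCast_val]) x, act_zero]
  · intro g g' hgg'
    have h0 := congrArg (fun e : BundleSpace n ≃ₜ BundleSpace n =>
      e (Quot.mk (deckRel n) (0, 0, 1))) hgg'
    change Quot.mk (deckRel n) (psiMap n (g.a.val : ℤ) (g.b.val : ℤ) (g.c.val : ℤ) (0, 0, 1)) =
      Quot.mk (deckRel n) (psiMap n (g'.a.val : ℤ) (g'.b.val : ℤ) (g'.c.val : ℤ) (0, 0, 1)) at h0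
    rw [quot_mk_eq_iff] at h0
    obtain ⟨a, b, heq⟩ := h0
    simp only [deckMap, psiMap, Prod.mk.injEq] at heq
    obtain ⟨h1, h2, h3⟩ := heq
    -- notation for the integer representatives
    set k : ℤ := (g.a.val : ℤ) with hk
    set l : ℤ := (g.b.val : ℤ) with hl
    set m : ℤ := (g.c.val : ℤ) with hm
    set k' : ℤ := (g'.a.val : ℤ) with hk'
    set l' : ℤ := (g'.b.val : ℤ) with hl'
    set m' : ℤ := (g'.c.val : ℤ) with hm'
    have hkb : 0 ≤ k ∧ k < n := ⟨Int.natCast_nonneg _, by rw [hk]; exact_mod_cast g.a.val_lt⟩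
    have hlb : 0 ≤ l ∧ l < n := ⟨Int.natCast_nonneg _, by rw [hl]; exact_mod_cast g.b.val_lt⟩
    have hmb : 0 ≤ m ∧ m < n := ⟨Int.natCast_nonneg _, by rw [hm]; exact_mod_cast g.c.val_lt⟩
    have hkb' : 0 ≤ k' ∧ k' < n := ⟨Int.natCast_nonneg _, by rw [hk']; exact_mod_cast g'.a.val_lt⟩
    have hlb' : 0 ≤ l' ∧ l' < n := ⟨Int.natCast_nonneg _, by rw [hl']; exact_mod_cast g'.b.val_lt⟩
    have hmb' : 0 ≤ m' ∧ m' < n := ⟨Int.natCast_nonneg _, by rw [hm']; exact_mod_cast g'.c.val_lt⟩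
    have hnpos : (0:ℤ) < n := by exact_mod_cast Nat.pos_of_ne_zero (by omega)
    -- first coordinate: k + a n = k'
    have h1' : (k : ℝ) + a * n = k' := by field_simp at h1; linarith
    have h1i : k + a * n = k' := by exact_mod_cast h1'
    have ha : a = 0 := by
      by_contra hcon
      rcases (by omega : 1 ≤ a ∨ a ≤ -1) with h' | h'
      · nlinarith [hkb.1, hkb'.2]
      · nlinarith [hkb.2, hkb'.1]
    have hkk : k = k' := by rw [ha] at h1i; omega
    -- second coordinate: l + b n = l'
    have h2' : (l : ℝ) + b * n = l' := by field_simp at h2; linarith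
    have h2i : l + b * n = l' := by exact_mod_cast h2'
    have hb : b = 0 := by
      by_contra hcon
      rcases (by omega : 1 ≤ b ∨ b ≤ -1) with h' | h'
      · nlinarith [hlb.1, hlb'.2]
      · nlinarith [hlb.2, hlb'.1]
    have hll : l = l' := by rw [hb] at h2i; omega
    -- third coordinate
    rw [ha] at h3
    simp only [Int.cast_zero, zero_mul, mul_zero, zero_add, mul_one, Circle.exp_zero,
      one_mul] at h3
    have h3' : Circle.exp (2 * π * ((m : ℝ) / n)) = Circle.exp (2 * π * ((m' : ℝ) / n)) := by
      simpa using h3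
    obtain ⟨j, hj⟩ := Circle.exp_eq_exp.mp h3'
    have h2π : (2 * π) ≠ 0 := by positivity
    have hz : (2 * π) * ((m : ℝ) / n - (m' : ℝ) / n - j) = 0 := by linear_combination hj
    have hz' : (m : ℝ) / n - (m' : ℝ) / n - j = 0 := by
      rcases mul_eq_zero.mp hz with h' | h'
      · exact absurd h' h2π
      · exact h'
    have h3r : (m : ℝ) = m' + j * n := by field_simp at hz'; linarith
    have h3i : m = m' + j * n := by exact_mod_cast h3r
    have hjz : j = 0 := by
      by_contra hcon
      rcases (by omega : 1 ≤ j ∨ j ≤ -1) with h' | h'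
      · nlinarith [hmb.2, hmb'.1]
      · nlinarith [hmb.1, hmb'.2]
    have hmm : m = m' := by rw [hjz] at h3i; omega
    ext
    · exact ZMod.val_injective n (by rw [hk, hk'] at hkk; exact_mod_cast hkk)
    · exact ZMod.val_injective n (by rw [hl, hl'] at hll; exact_mod_cast hll)
    · exact ZMod.val_injective n (by rw [hm, hm'] at hmm; exact_mod_cast hmm)
  · intro k l m x y z
    show act hn0 _ _ _ (Quot.mk (deckRel n) (x, y, z)) = _
    exact act_congr hn0 (k' := k) (l' := l) (m' := m)
        (by simp [intCast_val]) (by simp [intCast_val]) (by simp [intCast_val]) _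
end

section
/- Let p be a prime and let G = A ⋊_α H be a finite semidirect product, where A ≅ ℤ_p^r is elementary abelian, α : H → Aut(A) is an action of H on A, and |H| is not divisible by p. Let A' ≤ A be the subgroup of elements fixed by every element of H. Then A' has an H-invariant complement A'' ≤ A (that is, A = A' × A'' with A'' invariant under α(H)). Moreover, whenever G acts on a set X in such a way that the subgroup H acts trivially on X, the subgroup A'' also acts trivially on X. -/
/-- The subgroup of elements of `A` fixed by every element of `H` acting via
`α`. -/
def fixedSubgroup {A H : Type*} [CommGroup A] [Group H] (α : H →* MulAut A) :
    Subgroup A where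
  carrier := {a : A | ∀ h : H, α h a = a}
  one_mem' := by simp
  mul_mem' := by
    intro a b ha hb h
    rw [map_mul, ha h, hb h]
  inv_mem' := by
    intro a ha h
    rw [map_inv, ha h]

lemma eq_one_of_pow_coprime {G : Type*} [Group G] {x : G} {a b : ℕ}
    (hab : Nat.Coprime a b) (ha : x ^ a = 1) (hb : x ^ b = 1) : x = 1 := by
  have h1 : orderOf x ∣ a := orderOf_dvd_of_pow_eq_one ha
  have h2 : orderOf x ∣ b := orderOf_dvd_of_pow_eq_one hb
  have : orderOf x ∣ 1 := hab ▸ Nat.dvd_gcd h1 h2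
  exact orderOf_eq_one_iff.mp (Nat.eq_one_of_dvd_one this)

/-- in a semidirect product `G = A ⋊_α H` with `A ≅ ℤ_p^r`
elementary abelian and `p ∤ |H|`, the subgroup `A'` of `H`-fixed elements has
an `H`-invariant complement `A''`; moreover whenever `G` acts on a set `X`
with `H` acting trivially, `A''` acts trivially as well. -/
theorem invariant_complement_and_trivial_action
    (p r : ℕ) (hp : p.Prime)
    (A : Type) [CommGroup A] [Finite A]
    (hA : ∀ x : A, x ^ p = 1) (hAcard : Nat.card A = p ^ r)
    (H : Type) [Group H] [Finite H] (hH : ¬ p ∣ Nat.card H)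
    (α : H →* MulAut A) :
    ∃ A'' : Subgroup A,
      (∀ h : H, Subgroup.map (α h).toMonoidHom A'' = A'') ∧
      IsCompl (fixedSubgroup α) A'' ∧
      ∀ (X : Type) (σ : (A ⋊[α] H) →* Equiv.Perm X),
        (∀ h : H, σ (SemidirectProduct.inr h) = 1) →
        ∀ a : A, a ∈ A'' → σ (SemidirectProduct.inl a) = 1 := by
  classical
  haveI : Fintype H := Fintype.ofFinite H
  set n : ℕ := Nat.card H with hn
  have hcardH : Fintype.card H = n := (Nat.card_eq_fintype_card).symm
  have hcop : Nat.Coprime n p := ((hp.coprime_iff_not_dvd).mpr hH).symm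
  obtain ⟨m, -, hm⟩ := Nat.exists_mul_mod_eq_one_of_coprime hcop hp.one_lt
  have hnm : n * m = p * (n * m / p) + 1 := by
    conv_lhs => rw [← Nat.div_add_mod (n * m) p, hm]
  have hpm : Nat.Coprime p m := (hp.coprime_iff_not_dvd).mpr (by
    intro hdvd
    have h1 : p ∣ n * m := hdvd.mul_left n
    rw [Nat.dvd_iff_mod_eq_zero] at h1
    rw [hm] at h1
    exact one_ne_zero h1)
  let φ : A →* A :=
    { toFun := fun a => (∏ h : H, α h a) ^ m
      map_one' := by simp
      map_mul' := by
        intro a b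
        simp [map_mul, Finset.prod_mul_distrib, mul_pow] }
  have hφ_def : ∀ a : A, φ a = (∏ h : H, α h a) ^ m := fun a => rfl
  -- φ (α h a) = φ a
  have hφ_right : ∀ (h : H) (a : A), φ (α h a) = φ a := by
    intro h a
    simp only [hφ_def]
    congr 1
    exact Fintype.prod_equiv (Equiv.mulRight h) _ _ (fun h' => by
      rw [Equiv.coe_mulRight, ← MulAut.mul_apply, ← map_mul])
  -- φ a is H-fixed
  have hφ_fixed : ∀ a : A, φ a ∈ fixedSubgroup α := by
    intro a h
    show α h (φ a) = φ a
    simp only [hφ_def, map_pow]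
    congr 1
    rw [map_prod]
    exact Fintype.prod_equiv (Equiv.mulLeft h) _ _ (fun h' => by
      rw [Equiv.coe_mulLeft, ← MulAut.mul_apply, ← map_mul])
  -- φ fixes fixed elements
  have hφ_id : ∀ a : A, a ∈ fixedSubgroup α → φ a = a := by
    intro a ha
    have : ∀ h : H, α h a = a := ha
    simp only [hφ_def]
    rw [Finset.prod_congr rfl (fun h _ => this h), Finset.prod_const,
      Finset.card_univ, hcardH, ← pow_mul, hnm, pow_add, pow_mul, hA, one_pow, pow_one, one_mul]
  refine ⟨φ.ker, ?_, ?_, ?_⟩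
  · intro h
    ext x
    simp only [Subgroup.mem_map, MonoidHom.mem_ker, MulEquiv.coe_toMonoidHom]
    constructor
    · rintro ⟨a, ha, rfl⟩
      rw [hφ_right h a, ha]
    · intro hx
      refine ⟨α h⁻¹ x, ?_, ?_⟩
      · rw [hφ_right h⁻¹ x, hx]
      · simp only [← MulAut.mul_apply, ← map_mul α, mul_inv_cancel, map_one, MulAut.one_apply]
  · rw [isCompl_iff]
    constructor
    · rw [Subgroup.disjoint_def]
      intro a ha hker
      have h1 : φ a = a := hφ_id a ha
      rw [MonoidHom.mem_ker] at hker
      rw [← h1, hker]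
    · rw [codisjoint_iff, Subgroup.eq_top_iff']
      intro a
      have h1 : φ a ∈ fixedSubgroup α := hφ_fixed a
      have h2 : (φ a)⁻¹ * a ∈ φ.ker := by
        rw [MonoidHom.mem_ker, map_mul, map_inv, hφ_id (φ a) h1, inv_mul_cancel]
      have := Subgroup.mul_mem_sup h1 h2
      simpa using this
  · intro X σ hσ a ha
    rw [MonoidHom.mem_ker, hφ_def] at ha
    -- (∏ h, α h a) has order dividing p and its m-th power is 1, so it's 1
    have hprod : (∏ h : H, α h a) = 1 :=
      eq_one_of_pow_coprime hpm (hA _) ha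
    -- σ (inl (α h a)) = σ (inl a)
    have hconj : ∀ h : H, σ (SemidirectProduct.inl (α h a)) = σ (SemidirectProduct.inl a) := by
      intro h
      rw [SemidirectProduct.inl_aut]
      simp [map_mul, hσ h, hσ h⁻¹]
    have gen : ∀ s : Finset H, σ (SemidirectProduct.inl (∏ h ∈ s, α h a)) =
        σ (SemidirectProduct.inl a) ^ s.card := by
      intro s
      induction s using Finset.induction_on with
      | empty => simp
      | insert x s hx ih =>
        rw [Finset.prod_insert hx, map_mul, map_mul, ih, hconj,
          Finset.card_insert_of_notMem hx, pow_succ']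
    have hpow_n : σ (SemidirectProduct.inl a) ^ n = 1 := by
      have h1 := gen Finset.univ
      rw [hprod, Finset.card_univ, hcardH] at h1
      simpa using h1.symm
    have hpow_p : σ (SemidirectProduct.inl a) ^ p = 1 := by
      rw [← map_pow, ← map_pow, hA]; simp
    exact eq_one_of_pow_coprime hcop.symm hpow_p hpow_n
end

section
/- There is a function I : ℕ × ℕ → ℕ with the following property: let A be a finitely generated abelian group whose torsion-free rank is B and whose torsion subgroup has exactly τ elements, and let G be a finite group acting on A by automorphisms. Then G has a normal subgroup N of index at most I(B,τ) such that N acts trivially on the quotient A/pA for every prime p. -/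
section Aux

variable {n : Type} [Fintype n] [DecidableEq n]

lemma entry_dvd_mul {d : ℤ} (A B : Matrix n n ℤ) (hA : ∀ i j, d ∣ A i j) :
    ∀ i j, d ∣ (A * B) i j := by
  intro i j
  rw [Matrix.mul_apply]
  exact Finset.dvd_sum fun l _ => (hA i l).mul_right _

lemma entry_dvd_mul' {d e : ℤ} (A B : Matrix n n ℤ) (hA : ∀ i j, d ∣ A i j)
    (hB : ∀ i j, e ∣ B i j) : ∀ i j, d * e ∣ (A * B) i j := by
  intro i j
  rw [Matrix.mul_apply]
  exact Finset.dvd_sum fun l _ => mul_dvd_mul (hA i l) (hB l j)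

lemma entry_dvd_pow {d : ℤ} (A : Matrix n n ℤ) (hA : ∀ i j, d ∣ A i j) :
    ∀ m : ℕ, 2 ≤ m → ∀ i j, d * d ∣ (A ^ m) i j := by
  intro m hm i j
  obtain ⟨l, rfl⟩ := Nat.exists_eq_add_of_le hm
  rw [pow_add, pow_two, mul_assoc]
  exact entry_dvd_mul' A _ hA (entry_dvd_mul A _ hA) i j

set_option linter.unusedSectionVars false

lemma key_eq (p : ℕ) (hp : 2 ≤ p) (M : Matrix n n ℤ) (hM : M ^ p = 1) :
    (p : ℤ) • (M - 1) = - ∑ m ∈ Finset.Ico 2 (p+1), (p.choose m : ℤ) • (M - 1) ^ m := by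
  set N := M - 1 with hN
  have hM' : M = N + 1 := by rw [hN]; abel
  have h := (Commute.one_right N).add_pow p
  rw [← hM', hM] at h
  have hcast : ∀ (A : Matrix n n ℤ) (c : ℕ), A * (c : Matrix n n ℤ) = (c : ℤ) • A := by
    intro A c
    rw [show ((c : Matrix n n ℤ)) = (c : ℤ) • (1 : Matrix n n ℤ) by simp, mul_smul_comm, mul_one]
  have hsplit : ∑ m ∈ Finset.range (p+1), N ^ m * 1 ^ (p - m) * (p.choose m : Matrix n n ℤ) =
      1 + (p : ℤ) • N + ∑ m ∈ Finset.Ico 2 (p+1), (p.choose m : ℤ) • N ^ m := by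
    rw [Finset.range_eq_Ico, Finset.sum_eq_sum_Ico_succ_bot (by omega),
      Finset.sum_eq_sum_Ico_succ_bot (by omega)]
    have e0 : N ^ 0 * 1 ^ (p - 0) * (p.choose 0 : Matrix n n ℤ) = 1 := by simp
    have e1 : N ^ 1 * 1 ^ (p - 1) * (p.choose 1 : Matrix n n ℤ) = (p : ℤ) • N := by
      rw [pow_one, one_pow, mul_one, Nat.choose_one_right, hcast]
    rw [e0, e1, ← add_assoc]
    congr 1
    apply Finset.sum_congr rfl
    intro m _
    rw [one_pow, mul_one, hcast]
  rw [hsplit] at h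
  have h2 : (p : ℤ) • N + ∑ m ∈ Finset.Ico 2 (p+1), (p.choose m : ℤ) • N ^ m = 0 := by
    have := h.symm
    calc (p : ℤ) • N + ∑ m ∈ Finset.Ico 2 (p+1), (p.choose m : ℤ) • N ^ m
        = (1 + (p : ℤ) • N + ∑ m ∈ Finset.Ico 2 (p+1), (p.choose m : ℤ) • N ^ m) - 1 := by abel
      _ = 0 := by rw [this]; abel
  rw [eq_neg_iff_add_eq_zero]
  exact h2

lemma entry_dvd_pow' {d : ℤ} (A : Matrix n n ℤ) (hA : ∀ i j, d ∣ A i j) :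
    ∀ m : ℕ, 1 ≤ m → ∀ i j, d ^ m ∣ (A ^ m) i j := by
  intro m
  induction m with
  | zero => omega
  | succ l ih =>
    intro _ i j
    rcases Nat.eq_or_lt_of_le (Nat.one_le_iff_ne_zero.mpr (Nat.succ_ne_zero l)) with h | h
    · have hl0 : l = 0 := by omega
      subst hl0
      simpa using hA i j
    · have hl : 1 ≤ l := by omega
      rw [pow_succ, pow_succ]
      exact entry_dvd_mul' _ _ (ih hl) hA i j

lemma mink_prime (p : ℕ) (hp : p.Prime) (M : Matrix n n ℤ) (hM : M ^ p = 1)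
    (h3 : ∀ i j, (3:ℤ) ∣ (M - 1) i j) : M = 1 := by
  classical
  by_contra hne
  set N := M - 1 with hN
  have hNne : ∃ i j, N i j ≠ 0 := by
    by_contra h
    push_neg at h
    apply hne
    ext i j
    have := h i j
    rw [hN, Matrix.sub_apply, sub_eq_zero] at this
    exact this
  obtain ⟨i0, j0, hij⟩ := hNne
  set P : ℕ → Prop := fun k => ∀ i j, (3:ℤ)^k ∣ N i j with hPdef
  set b : ℕ := (N i0 j0).natAbs with hb
  have hbound : ∀ k, P k → k ≤ b := by
    intro k hk
    have h := hk i0 j0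
    have h1 : (3:ℕ)^k ∣ b := by
      rw [← Int.natAbs_dvd_natAbs] at h
      simpa [Int.natAbs_pow] using h
    have h2 := Nat.le_of_dvd (Int.natAbs_pos.mpr hij) h1
    have h3' : k < 3^k := Nat.lt_pow_self (by norm_num : 1 < 3)
    omega
  have hP1 : P 1 := by
    intro i j
    rw [pow_one]
    exact h3 i j
  have hbpos : 1 ≤ b := hbound 1 hP1
  set k := Nat.findGreatest P b with hkdef
  have hPk : P k := Nat.findGreatest_spec hbpos hP1
  have hk1 : 1 ≤ k := Nat.le_findGreatest hbpos hP1
  have hnot : ¬ P (k+1) := by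
    intro hPk1
    have := hbound (k+1) hPk1
    exact absurd hPk1 (Nat.findGreatest_is_greatest (Nat.lt_succ_self k) this)
  apply hnot
  intro i j
  have hkey := key_eq p hp.two_le M hM
  have hentry : ((p:ℕ) : ℤ) * N i j =
      - ∑ m ∈ Finset.Ico 2 (p+1), ((p.choose m : ℕ) : ℤ) * (N ^ m) i j := by
    have h0 := congrArg (fun (X : Matrix n n ℤ) => X i j) hkey
    simp only [Matrix.smul_apply, Matrix.neg_apply, Matrix.sum_apply, smul_eq_mul, ← hN] at h0
    exact h0
  have hNm : ∀ m : ℕ, 1 ≤ m → (3:ℤ)^(k*m) ∣ (N ^ m) i j := by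
    intro m hm
    have := entry_dvd_pow' N hPk m hm i j
    rwa [← pow_mul] at this
  by_cases hp3 : p = 3
  · subst hp3
    have hsum : (3:ℤ)^(k+2) ∣ ∑ m ∈ Finset.Ico 2 (3+1), ((Nat.choose 3 m : ℕ) : ℤ) * (N ^ m) i j := by
      apply Finset.dvd_sum
      intro m hm
      rw [Finset.mem_Ico] at hm
      obtain ⟨hm2, hm4⟩ := hm
      interval_cases m
      · have hc : ((Nat.choose 3 2 : ℕ) : ℤ) = 3 := by norm_num
        rw [hc]
        have h1 : (3:ℤ) * (3:ℤ)^(k*2) ∣ 3 * (N^2) i j := mul_dvd_mul_left 3 (hNm 2 (by omega))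
        refine dvd_trans ?_ h1
        have : (3:ℤ) * 3^(k*2) = 3^(k*2+1) := by ring
        rw [this]
        exact pow_dvd_pow 3 (by omega)
      · have hc : ((Nat.choose 3 3 : ℕ) : ℤ) = 1 := by norm_num
        rw [hc, one_mul]
        exact dvd_trans (pow_dvd_pow 3 (by omega)) (hNm 3 (by omega))
    have hdvd : (3:ℤ)^(k+2) ∣ ((3:ℕ) : ℤ) * N i j := by
      rw [hentry]
      exact hsum.neg_right
    have hcast : ((3:ℕ) : ℤ) = 3 := by norm_num
    rw [hcast] at hdvd
    have h32 : (3:ℤ)^(k+2) = 3 * 3^(k+1) := by ring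
    rw [h32] at hdvd
    exact (mul_dvd_mul_iff_left (by norm_num : (3:ℤ) ≠ 0)).mp hdvd
  · have hsum : (3:ℤ)^(k+1) ∣ ∑ m ∈ Finset.Ico 2 (p+1), ((p.choose m : ℕ) : ℤ) * (N ^ m) i j := by
      apply Finset.dvd_sum
      intro m hm
      rw [Finset.mem_Ico] at hm
      exact Dvd.dvd.mul_left
        (dvd_trans (pow_dvd_pow 3 (by nlinarith [hm.1, hk1])) (hNm m (by omega))) _
    have hdvd : (3:ℤ)^(k+1) ∣ ((p:ℕ) : ℤ) * N i j := by
      rw [hentry]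
      exact hsum.neg_right
    have hcop : IsCoprime ((3:ℤ)^(k+1)) ((p:ℕ) : ℤ) := by
      apply IsCoprime.pow_left
      rw [Int.isCoprime_iff_gcd_eq_one]
      simpa [Int.gcd] using (Nat.coprime_primes (by norm_num) hp).mpr (fun h => hp3 h.symm)
    exact hcop.dvd_of_dvd_mul_left hdvd

lemma mink (M : Matrix n n ℤ) (e : ℕ) (he : 1 ≤ e) (hM : M ^ e = 1)
    (h3 : ∀ i j, (3:ℤ) ∣ (M - 1) i j) : M = 1 := by
  induction e using Nat.strong_induction_on generalizing M with
  | _ e ih =>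
    rcases Nat.eq_or_lt_of_le he with h1 | h1
    · rw [← h1, pow_one] at hM; exact hM
    · set p := e.minFac with hp
      have hpp : p.Prime := Nat.minFac_prime (by omega)
      set f := e / p with hf
      have hfe : f * p = e := Nat.div_mul_cancel e.minFac_dvd
      have hf1 : 1 ≤ f := Nat.one_le_iff_ne_zero.mpr (by
        intro h0
        rw [h0, zero_mul] at hfe
        omega)
      have hMf : (M ^ f) ^ p = 1 := by rw [← pow_mul, hfe]; exact hM
      have h3f : ∀ i j, (3:ℤ) ∣ (M ^ f - 1) i j := by
        have key : ∀ g : ℕ, ∀ i j, (3:ℤ) ∣ (M ^ g - 1) i j := by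
          intro g
          induction g with
          | zero => simp
          | succ t iht =>
            intro i j
            have hEq : M ^ (t+1) - 1 = (M ^ t - 1) * M + (M - 1) := by
              rw [pow_succ]
              noncomm_ring
            rw [hEq, Matrix.add_apply]
            exact dvd_add (entry_dvd_mul _ M iht i j) (h3 i j)
        exact key f
      have hMf1 : M ^ f = 1 := mink_prime p hpp (M ^ f) hMf h3f
      have hflt : f < e := by
        have h2 := hpp.two_le
        calc f < f * 2 := by omega
          _ ≤ f * p := Nat.mul_le_mul_left f h2
          _ = e := hfe
      exact ih f hflt M hf1 hMf1 h3

/-- The subgroup of `m`-th multiples. -/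
def mSub (m : ℕ) (A : Type) [AddCommGroup A] : AddSubgroup A where
  carrier := Set.range (fun a : A => m • a)
  zero_mem' := ⟨0, smul_zero m⟩
  add_mem' := by rintro x y ⟨a, rfl⟩ ⟨b, rfl⟩; exact ⟨a + b, by simp [smul_add]⟩
  neg_mem' := by rintro x ⟨a, rfl⟩; exact ⟨-a, by simp⟩

lemma mem_mSub {m : ℕ} {A : Type} [AddCommGroup A] {x : A} :
    x ∈ mSub m A ↔ ∃ a : A, m • a = x := Iff.rfl

/-- Core rigidity lemma: a finite-order automorphism of `ℤ^B × T` which is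
trivial modulo `3 * |T|` is the identity. -/
lemma core_fix (B : ℕ) (T : Type) [AddCommGroup T] [Finite T]
    (φ : ((Fin B → ℤ) × T) ≃+ ((Fin B → ℤ) × T)) (nn : ℕ) (hnn : 1 ≤ nn)
    (hit : ∀ x, (⇑φ)^[nn] x = x)
    (hmod : ∀ x, ∃ y, φ x - x = (3 * Nat.card T) • y) :
    ∀ x, φ x = x := by
  set τ := Nat.card T with hτ
  have τpos : 0 < τ := Nat.card_pos
  set m := 3 * τ with hm
  have step1 : ∀ t : T, (φ ((0 : Fin B → ℤ), t)).1 = 0 := by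
    intro t
    have h1 : τ • φ (0, t) = φ (τ • ((0 : Fin B → ℤ), t)) := (map_nsmul φ τ _).symm
    have h2 : τ • ((0 : Fin B → ℤ), t) = 0 := by
      have ht : τ • t = 0 := card_nsmul_eq_zero'
      refine Prod.ext ?_ ?_
      · rw [Prod.smul_fst]; exact smul_zero τ
      · rw [Prod.smul_snd]; exact ht
    rw [h2, map_zero] at h1
    have h3 : τ • (φ (0, t)).1 = 0 := by
      rw [← Prod.smul_fst, h1]; rfl
    funext i
    have h4 : (τ : ℤ) * (φ (0, t)).1 i = 0 := by
      have := congrFun h3 i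
      simpa [nsmul_eq_mul] using this
    have hτne : (τ : ℤ) ≠ 0 := by exact_mod_cast τpos.ne'
    have := (mul_eq_zero.mp h4).resolve_left hτne
    simpa using this
  set α : (Fin B → ℤ) →+ (Fin B → ℤ) := AddMonoidHom.mk' (fun v => (φ (v, 0)).1) (by
    intro a b
    have hsplit : ((a + b : Fin B → ℤ), (0 : T)) = (a, 0) + (b, 0) := by
      refine Prod.ext ?_ ?_ <;> simp
    show (φ ((a + b : Fin B → ℤ), (0 : T))).1 = (φ (a, 0)).1 + (φ (b, 0)).1
    rw [hsplit, map_add]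
    rfl) with hα
  have hfst : ∀ x : (Fin B → ℤ) × T, (φ x).1 = α x.1 := by
    intro x
    have hx : x = (x.1, 0) + (0, x.2) := by refine Prod.ext ?_ ?_ <;> simp
    calc (φ x).1 = (φ ((x.1, 0) + (0, x.2))).1 := by rw [← hx]
      _ = (φ (x.1, 0)).1 + (φ (0, x.2)).1 := by rw [map_add]; rfl
      _ = α x.1 := by rw [step1, add_zero]; rfl
  have hαit : ∀ (j : ℕ) (x : (Fin B → ℤ) × T), ((⇑φ)^[j] x).1 = (⇑α)^[j] x.1 := by
    intro j
    induction j with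
    | zero => intro x; rfl
    | succ l ih =>
      intro x
      rw [Function.iterate_succ_apply', Function.iterate_succ_apply', hfst, ih]
  have hαnn : ∀ v, (⇑α)^[nn] v = v := by
    intro v
    have h := hαit nn ((v, (0 : T)))
    rw [hit] at h
    exact h.symm
  set L := α.toIntLinearMap with hL
  set M := LinearMap.toMatrixAlgEquiv' L with hM
  have hLpow : L ^ nn = 1 := by
    apply LinearMap.ext
    intro v
    rw [Module.End.pow_apply, Module.End.one_apply]
    exact hαnn v
  have hMpow : M ^ nn = 1 := by rw [hM, ← map_pow, hLpow, map_one]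
  have hM3 : ∀ i j, (3 : ℤ) ∣ (M - 1) i j := by
    intro i j
    set u : Fin B → ℤ := fun j' => if j' = j then 1 else 0 with hu
    obtain ⟨y, hy⟩ := hmod (u, 0)
    have h1 : (φ (u, (0 : T))).1 - u = m • y.1 := by
      have h := congrArg Prod.fst hy
      simp only [Prod.fst_sub, Prod.smul_fst] at h
      exact h
    have hMij : M i j = (φ (u, (0 : T))).1 i := by
      have hsu : (Pi.single j 1 : Fin B → ℤ) = u := by
        funext j'; simp [hu, Pi.single_apply]
      rw [hM, LinearMap.toMatrixAlgEquiv'_apply, hsu]; rfl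
    have hone : (1 : Matrix (Fin B) (Fin B) ℤ) i j = u i := by
      rw [Matrix.one_apply, hu]
    have h3 := congrFun h1 i
    simp only [Pi.sub_apply, Pi.smul_apply, nsmul_eq_mul] at h3
    rw [Matrix.sub_apply, hMij, hone, h3]
    have hdm : (3 : ℤ) ∣ (m : ℤ) := by
      rw [hm]; push_cast; exact dvd_mul_right 3 (τ : ℤ)
    exact hdm.mul_right _
  have hM1 : M = 1 := mink M nn hnn hMpow hM3
  have hαid : ∀ v, α v = v := by
    intro v
    have hL1 : L = 1 := by
      apply LinearMap.toMatrixAlgEquiv'.injective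
      rw [← hM, hM1, map_one]
    show L v = v
    rw [hL1, Module.End.one_apply]
  intro x
  obtain ⟨y, hy⟩ := hmod x
  have hy1 : (φ x).1 - x.1 = m • y.1 := by
    have h := congrArg Prod.fst hy
    simpa [Prod.fst_sub, Prod.smul_fst] using h
  have hy2 : (φ x).2 - x.2 = m • y.2 := by
    have h := congrArg Prod.snd hy
    simpa [Prod.snd_sub, Prod.smul_snd] using h
  have hz1 : (φ x).1 - x.1 = 0 := by rw [hfst, hαid, sub_self]
  have hz2 : m • y.2 = 0 := by
    have hty : τ • y.2 = 0 := card_nsmul_eq_zero'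
    rw [hm, mul_smul, hty, smul_zero]
  have hsub : φ x - x = 0 := by
    refine Prod.ext ?_ ?_
    · rw [Prod.fst_sub, hz1]; rfl
    · rw [Prod.snd_sub, hy2, hz2]; rfl
  exact sub_eq_zero.mp hsub

end Aux



/-- there is a function `I` such that every finite group `G`
acting by automorphisms on a finitely generated abelian group
`A ≅ ℤ^B × T` (with `T` finite of cardinality `τ`) has a normal subgroup `N`
of index at most `I(B,τ)` acting trivially on `A/pA` for every prime `p`. -/
theorem bounded_index_subgroup_acting_trivially_mod_p :
    ∃ I : ℕ × ℕ → ℕ,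
      ∀ (B τ : ℕ) (A : Type) [AddCommGroup A]
        (T : Type) [AddCommGroup T] [Finite T],
        Nat.card T = τ →
        Nonempty (A ≃+ ((Fin B → ℤ) × T)) →
        ∀ (G : Type) [Group G] [Finite G] (ρ : G →* Multiplicative (AddAut A)),
          ∃ N : Subgroup G, N.Normal ∧ N.index ≤ I (B, τ) ∧
            ∀ g ∈ N, ∀ p : ℕ, p.Prime → ∀ a : A, ∃ b : A, Multiplicative.toAdd (ρ g) a = a + p • b := by
  classical
  refine ⟨fun bt => ((3 * bt.2) ^ bt.1 * bt.2) ^ ((3 * bt.2) ^ bt.1 * bt.2), ?_⟩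
  intro B τ A instA T instT instFT hτ hne G instG instFG ρ
  obtain ⟨ε⟩ := hne
  have τpos : 0 < τ := hτ ▸ Nat.card_pos
  set m := 3 * τ with hm
  have mpos : 0 < m := by omega
  set S := mSub m A with hS
  have hmap : ∀ g : G, AddSubgroup.map (((Multiplicative.toAdd (ρ g)) : A ≃+ A) : A →+ A) S = S := by
    intro g
    apply le_antisymm
    · rintro x hx
      rw [AddSubgroup.mem_map] at hx
      obtain ⟨a, ha, rfl⟩ := hx
      obtain ⟨b, rfl⟩ := mem_mSub.mp ha
      exact mem_mSub.mpr ⟨(Multiplicative.toAdd (ρ g)) b, (map_nsmul ((Multiplicative.toAdd (ρ g)) : A ≃+ A) m b).symm⟩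
    · rintro x hx
      obtain ⟨b, rfl⟩ := mem_mSub.mp hx
      rw [AddSubgroup.mem_map]
      refine ⟨m • ((Multiplicative.toAdd (ρ g))).symm b, mem_mSub.mpr ⟨((Multiplicative.toAdd (ρ g))).symm b, rfl⟩, ?_⟩
      rw [map_nsmul]
      congr 1
      exact ((Multiplicative.toAdd (ρ g))).apply_symm_apply b
  set Q := A ⧸ S with hQ
  set ψfun : G → Multiplicative (AddAut Q) := fun g => Multiplicative.ofAdd <| QuotientAddGroup.congr S S ((Multiplicative.toAdd (ρ g))) (hmap g) with hψfun
  have ψmul : ∀ g h : G, ψfun (g * h) = ψfun g * ψfun h := by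
    intro g h
    apply Multiplicative.toAdd.injective
    apply AddEquiv.ext
    intro q
    refine QuotientAddGroup.induction_on q ?_
    intro a
    rw [toAdd_mul, AddAut.add_apply]
    show QuotientAddGroup.mk (Multiplicative.toAdd (ρ (g * h)) a) =
      Multiplicative.toAdd (ψfun g) (QuotientAddGroup.mk ((Multiplicative.toAdd (ρ h)) a))
    rw [map_mul]
    rfl
  set ψ : G →* Multiplicative (AddAut Q) := MonoidHom.mk' ψfun ψmul with hψ
  refine ⟨ψ.ker, MonoidHom.normal_ker ψ, ?_, ?_⟩
  · -- index bound
    haveI : NeZero m := ⟨mpos.ne'⟩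
    set s : ((Fin B → ZMod m) × T) → Q :=
      fun wt => QuotientAddGroup.mk (ε.symm ((fun i => ((wt.1 i).val : ℤ)), wt.2)) with hs
    have hssurj : Function.Surjective s := by
      intro q
      refine QuotientAddGroup.induction_on q ?_
      intro a
      refine ⟨((fun i => (((ε a).1 i : ℤ) : ZMod m)), (ε a).2), ?_⟩
      rw [hs]
      refine (QuotientAddGroup.eq_iff_sub_mem).mpr ?_
      set v' : Fin B → ℤ := fun i => ((((ε a).1 i : ℤ) : ZMod m).val : ℤ) with hv'
      have hdvd : ∀ i, (m : ℤ) ∣ (v' i - (ε a).1 i) := by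
        intro i
        have : (((v' i - (ε a).1 i : ℤ)) : ZMod m) = 0 := by
          push_cast [hv']
          simp [ZMod.natCast_val, ZMod.cast_id]
        exact (ZMod.intCast_zmod_eq_zero_iff_dvd _ m).mp this
      have hc : ∀ i, ∃ c : ℤ, v' i - (ε a).1 i = (m : ℤ) * c := fun i => (hdvd i).imp (fun c hc => hc)
      choose c hcspec using hc
      have hkey : ε.symm (v', (ε a).2) - a = ε.symm ((fun i => (m:ℤ) * c i), 0) := by
        rw [show a = ε.symm (ε a) from (ε.symm_apply_apply a).symm, ← map_sub]
        congr 1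
        refine Prod.ext ?_ ?_
        · rw [Prod.fst_sub]
          funext i
          simpa using hcspec i
        · rw [Prod.snd_sub]
          simp
      rw [hkey]
      refine mem_mSub.mpr ⟨ε.symm ((fun i => (c i : ℤ)), 0), ?_⟩
      rw [← map_nsmul]
      congr 1
      refine Prod.ext ?_ ?_
      · rw [Prod.smul_fst]
        funext i
        simp [nsmul_eq_mul]
      · rw [Prod.smul_snd, smul_zero]
    haveI : Finite Q := Finite.of_surjective s hssurj
    haveI : Finite (AddAut Q) :=
      Finite.of_injective (fun f : AddAut Q => (f : Q → Q)) DFunLike.coe_injective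
    have hQcard : Nat.card Q ≤ m ^ B * τ := by
      have h1 := Nat.card_le_card_of_surjective s hssurj
      calc Nat.card Q ≤ Nat.card ((Fin B → ZMod m) × T) := h1
        _ = m ^ B * τ := by simp [Nat.card_prod, Nat.card_fun, Nat.card_zmod, hτ]
    have hker : ψ.ker.index ≤ Nat.card (AddAut Q) := by
      rw [Subgroup.index_ker]
      exact Nat.card_le_card_of_injective _ Subtype.val_injective
    have hAut : Nat.card (AddAut Q) ≤ Nat.card Q ^ Nat.card Q := by
      have h2 := Nat.card_le_card_of_injective
        (fun f : AddAut Q => (f : Q → Q)) DFunLike.coe_injective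
      rwa [Nat.card_fun] at h2
    have hCpos : 0 < m ^ B * τ := by positivity
    calc ψ.ker.index ≤ Nat.card (AddAut Q) := hker
      _ ≤ Nat.card Q ^ Nat.card Q := hAut
      _ ≤ (m ^ B * τ) ^ Nat.card Q := Nat.pow_le_pow_left hQcard _
      _ ≤ (m ^ B * τ) ^ (m ^ B * τ) := Nat.pow_le_pow_right hCpos hQcard
      _ = ((3 * τ) ^ B * τ) ^ ((3 * τ) ^ B * τ) := by rw [hm]
  · -- triviality mod p
    intro g hg p hp a
    have hψg : ψ g = 1 := (MonoidHom.mem_ker).mp hg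
    have hmod : ∀ a : A, ∃ b : A, ((Multiplicative.toAdd (ρ g))) a - a = m • b := by
      intro a
      have h1 : Multiplicative.toAdd (ψfun g) (QuotientAddGroup.mk a) = QuotientAddGroup.mk a := by
        rw [show ψfun g = ψ g from rfl, hψg]
        rfl
      have h2 : (QuotientAddGroup.mk (((Multiplicative.toAdd (ρ g))) a) : Q) = QuotientAddGroup.mk a := h1
      have h3 := (QuotientAddGroup.eq_iff_sub_mem).mp h2
      exact mem_mSub.mp h3 |>.imp (fun b hb => hb.symm)
    set nn := Nat.card G with hnn
    have nnpos : 1 ≤ nn := Nat.card_pos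
    have hgnn : g ^ nn = 1 := pow_card_eq_one'
    have hiter : ∀ (j : ℕ) (a : A), (⇑((Multiplicative.toAdd (ρ g))))^[j] a = Multiplicative.toAdd (ρ (g ^ j)) a := by
      intro j
      induction j with
      | zero => intro a; simp
      | succ l ih =>
        intro a
        rw [Function.iterate_succ_apply, ih (((Multiplicative.toAdd (ρ g))) a), pow_succ, map_mul, toAdd_mul, AddAut.add_apply]
    have hit : ∀ a : A, (⇑((Multiplicative.toAdd (ρ g))))^[nn] a = a := by
      intro a
      rw [hiter nn a, hgnn, map_one]
      rfl
    set φP : ((Fin B → ℤ) × T) ≃+ ((Fin B → ℤ) × T) :=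
      (ε.symm.trans ((Multiplicative.toAdd (ρ g)) : A ≃+ A)).trans ε with hφPdef
    have hφP : ∀ x, φP x = ε (((Multiplicative.toAdd (ρ g))) (ε.symm x)) := fun x => rfl
    have hitP : ∀ x, (⇑φP)^[nn] x = x := by
      have hconj : ∀ (j : ℕ) (x), (⇑φP)^[j] x = ε ((⇑((Multiplicative.toAdd (ρ g))))^[j] (ε.symm x)) := by
        intro j
        induction j with
        | zero => intro x; simp
        | succ l ih =>
          intro x
          rw [Function.iterate_succ_apply', ih, Function.iterate_succ_apply', hφP]
          simp
      intro x
      rw [hconj, hit]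
      simp
    have hmodP : ∀ x, ∃ y, φP x - x = (3 * Nat.card T) • y := by
      intro x
      obtain ⟨b, hb⟩ := hmod (ε.symm x)
      refine ⟨ε b, ?_⟩
      have h1 : ε (((Multiplicative.toAdd (ρ g))) (ε.symm x)) - x = ε (((Multiplicative.toAdd (ρ g))) (ε.symm x) - ε.symm x) := by
        rw [map_sub, ε.apply_symm_apply]
      rw [hφP, h1, hb, map_nsmul, hτ, ← hm]
    have hfix := core_fix B T φP nn nnpos hitP hmodP
    have hfa : φP (ε a) = ε a := hfix (ε a)
    rw [hφP] at hfa
    have hkey : ((Multiplicative.toAdd (ρ g))) a = a := by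
      have := congrArg ε.symm hfa
      simpa using this
    exact ⟨0, by rw [hkey, smul_zero, add_zero]⟩
end
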